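/- arXiv:2511.07008 — 2 statements merged into one kernel-verified Lean document; each statement's English description precedes it below -/
import Mathlib

section
/- Let H be a rectilinear hole (closed region bounded by a closed rectilinear arc) and let e be a horizontal edge of its boundary. If e is a clockwise-leftward edge, then points of the interior of H sufficiently close to the relative interior of e lie above e; if e is a clockwise-rightward edge, then such interior points lie below e. -/
open Set

/-- A clockwise-oriented simple rectilinear polygon with `n + 1` vertices,
listed in the order of a clockwise traversal of its boundary. -/
structure RectPolygon (n : ℕ) where
  v : Fin (n + 1) → ℝ × ℝ
  inj : Function.Injective v
  axis : ∀ i : Fin (n + 1), (v i).1 = (v (i + 1)).1 ∨ (v i).2 = (v (i + 1)).2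
  nondegen : ∀ i : Fin (n + 1), v i ≠ v (i + 1)
  alternate : ∀ i : Fin (n + 1), ((v i).1 = (v (i + 1)).1) ↔ ¬((v (i + 1)).1 = (v (i + 2)).1)
  simple : ∀ i j : Fin (n + 1), j ≠ i → j ≠ i + 1 → j + 1 ≠ i →
      Disjoint (segment ℝ (v i) (v (i + 1))) (segment ℝ (v j) (v (j + 1)))
  clockwise : (∑ i : Fin (n + 1), ((v i).1 * (v (i + 1)).2 - (v (i + 1)).1 * (v i).2)) < 0

/-- Clockwise distance from edge `s` to edge `i` (cyclically). -/
def cpos {m : ℕ} (s i : Fin m) : ℕ := ((i - s : Fin m) : ℕ)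

namespace RectPolygon

variable {n : ℕ} (P : RectPolygon n)

/-- The `i`-th boundary edge, from vertex `i` to vertex `i+1`. -/
def edge (i : Fin (n + 1)) : Set (ℝ × ℝ) := segment ℝ (P.v i) (P.v (i + 1))

/-- The boundary of the polygon: a closed rectilinear arc. -/
def boundary : Set (ℝ × ℝ) := ⋃ i, P.edge i

def Horiz (i : Fin (n + 1)) : Prop := (P.v i).2 = (P.v (i + 1)).2
def Vert (i : Fin (n + 1)) : Prop := (P.v i).1 = (P.v (i + 1)).1

/-- Clockwise-rightward edge. -/
def Rightward (i : Fin (n + 1)) : Prop := P.Horiz i ∧ (P.v i).1 < (P.v (i + 1)).1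
/-- Clockwise-leftward edge. -/
def Leftward (i : Fin (n + 1)) : Prop := P.Horiz i ∧ (P.v (i + 1)).1 < (P.v i).1
def Upward (i : Fin (n + 1)) : Prop := P.Vert i ∧ (P.v i).2 < (P.v (i + 1)).2
def Downward (i : Fin (n + 1)) : Prop := P.Vert i ∧ (P.v (i + 1)).2 < (P.v i).2

/-- A leftmost edge: a vertical edge whose two neighbouring horizontal edges lie to its
right and with the interior of the hole to its right (in clockwise convention: an upward
edge preceded by a leftward edge and followed by a rightward edge). -/
def LeftmostEdge (i : Fin (n + 1)) : Prop := P.Upward i ∧ P.Leftward (i - 1) ∧ P.Rightward (i + 1)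
/-- A right notch: a vertical edge whose two neighbouring horizontal edges lie to its right
but with the interior of the hole to its left. -/
def RightNotch (i : Fin (n + 1)) : Prop := P.Downward i ∧ P.Leftward (i - 1) ∧ P.Rightward (i + 1)
/-- A rightmost edge. -/
def RightmostEdge (i : Fin (n + 1)) : Prop := P.Downward i ∧ P.Rightward (i - 1) ∧ P.Leftward (i + 1)
/-- A left notch. -/
def LeftNotch (i : Fin (n + 1)) : Prop := P.Upward i ∧ P.Rightward (i - 1) ∧ P.Leftward (i + 1)
/-- A topmost edge. -/
def TopmostEdge (i : Fin (n + 1)) : Prop := P.Rightward i ∧ P.Upward (i - 1) ∧ P.Downward (i + 1)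
/-- A top notch. -/
def TopNotch (i : Fin (n + 1)) : Prop := P.Rightward i ∧ P.Downward (i - 1) ∧ P.Upward (i + 1)

/-- A falling corner at vertex `v (i + 1)`: preceding edge downward, succeeding edge rightward. -/
def FallingCornerAt (i : Fin (n + 1)) : Prop := P.Downward i ∧ P.Rightward (i + 1)

/-- A BLS-hole: no right notches, no top notches, and at most one falling corner. -/
def BLS : Prop := (∀ i, ¬ P.RightNotch i) ∧ (∀ i, ¬ P.TopNotch i) ∧
  (∀ i j, P.FallingCornerAt i → P.FallingCornerAt j → i = j)

/-- A nice hole: a BLS-hole without left notches. -/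
def Nice : Prop := P.BLS ∧ ∀ i, ¬ P.LeftNotch i

/-- The closed region bounded by the polygon: boundary plus inner (bounded) region. -/
def region : Set (ℝ × ℝ) :=
  P.boundary ∪ {p | p ∉ P.boundary ∧ Bornology.IsBounded (connectedComponentIn P.boundaryᶜ p)}


def xMinEdge (i : Fin (n + 1)) : ℝ := min (P.v i).1 (P.v (i + 1)).1

/-- Point on edge `i` at parameter `t ∈ [0,1]`. -/
def ptOn (i : Fin (n + 1)) (t : ℝ) : ℝ × ℝ := P.v i + t • (P.v (i + 1) - P.v i)

def yMax : ℝ := Finset.univ.sup' Finset.univ_nonempty fun i => (P.v i).2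
def yMin : ℝ := Finset.univ.inf' Finset.univ_nonempty fun i => (P.v i).2

/-- The lower boundary: edges strictly between the leftmost edge `l` and the rightmost
edge `r` in anticlockwise order. -/
def FBset (l r : Fin (n + 1)) : Set (ℝ × ℝ) :=
  ⋃ a ∈ {a : Fin (n + 1) | 1 ≤ cpos a l ∧ cpos a l < cpos r l}, P.edge a

/-- The upper boundary: edges strictly between `l` and `r` in clockwise order. -/
def FTset (l r : Fin (n + 1)) : Set (ℝ × ℝ) :=
  ⋃ a ∈ {a : Fin (n + 1) | 1 ≤ cpos l a ∧ cpos l a < cpos l r}, P.edge a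

/-- The upper vertices of the left notches. -/
def QPoints : Set (ℝ × ℝ) := {p | ∃ i, P.LeftNotch i ∧ p = P.v (i + 1)}

end RectPolygon

namespace RectAux
open RectPolygon Set

noncomputable section

def rot (p : ℝ × ℝ) : ℝ × ℝ := (-p.2, p.1)
def dot (p q : ℝ × ℝ) : ℝ := p.1 * q.1 + p.2 * q.2

lemma dot_smul_smul (a b : ℝ) (p q : ℝ × ℝ) : dot (a • p) (b • q) = a * b * dot p q := by
  simp [dot]; ring

lemma dot_smul_right (c : ℝ) (p q : ℝ × ℝ) : dot p (c • q) = c * dot p q := by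
  simp [dot]; ring

variable {n : ℕ} (P : RectPolygon n)

def dvec (k : Fin (n+1)) : ℝ × ℝ := P.v (k+1) - P.v k
def len (k : Fin (n+1)) : ℝ := ‖dvec P k‖
def tang (k : Fin (n+1)) : ℝ × ℝ := (len P k)⁻¹ • dvec P k
def crossE (k : Fin (n+1)) : ℝ :=
  (tang P k).1 * (tang P (k+1)).2 - (tang P k).2 * (tang P (k+1)).1
def ext (σ δ : ℝ) (k : Fin (n+1)) : ℝ := if crossE P (k-1) = -σ then δ else 0
def nvec (σ : ℝ) (k : Fin (n+1)) : ℝ × ℝ := σ • rot (tang P k)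
def strip (σ δ : ℝ) (k : Fin (n+1)) : Set (ℝ × ℝ) :=
  {z | dot (z - P.v k) (tang P k) ∈ Ioo (-(ext P σ δ k)) (len P k + ext P σ δ (k+1)) ∧
       dot (z - P.v k) (nvec P σ k) ∈ Ioo 0 δ}
def base (σ δ : ℝ) : ℝ × ℝ := P.v 0 + (len P 0 / 2) • tang P 0 + (δ/2) • nvec P σ 0

lemma dvec_ne (k : Fin (n+1)) : dvec P k ≠ 0 := by
  rw [dvec, sub_ne_zero]; exact fun h => P.nondegen k h.symm

lemma len_pos (k : Fin (n+1)) : 0 < len P k := by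
  rw [len, norm_pos_iff]; exact dvec_ne P k

lemma tform (k : Fin (n+1)) :
    tang P k = (1,0) ∨ tang P k = (-1,0) ∨ tang P k = (0,1) ∨ tang P k = (0,-1) := by
  have hd := dvec_ne P k
  rcases P.axis k with h | h
  · have h1 : (dvec P k).1 = 0 := by simp [dvec, h]
    have h2 : (dvec P k).2 ≠ 0 := fun h2 => hd (Prod.ext h1 h2)
    have hl : len P k = |(dvec P k).2| := by
      rw [len, Prod.norm_def, h1]; simp [Real.norm_eq_abs, abs_nonneg]
    have ht : tang P k = (0, (dvec P k).2 / |(dvec P k).2|) := by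
      rw [tang, hl, Prod.smul_def, smul_eq_mul, smul_eq_mul, h1]
      rw [mul_zero, div_eq_inv_mul]
    rcases h2.lt_or_gt with hlt | hlt
    · right; right; right; rw [ht, abs_of_neg hlt]
      rw [div_neg, div_self h2]
    · right; right; left; rw [ht, abs_of_pos hlt, div_self h2]
  · have h1 : (dvec P k).2 = 0 := by simp [dvec, h]
    have h2 : (dvec P k).1 ≠ 0 := fun h2 => hd (Prod.ext h2 h1)
    have hl : len P k = |(dvec P k).1| := by
      rw [len, Prod.norm_def, h1]; simp [Real.norm_eq_abs, abs_nonneg]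
    have ht : tang P k = ((dvec P k).1 / |(dvec P k).1|, 0) := by
      rw [tang, hl, Prod.smul_def, smul_eq_mul, smul_eq_mul, h1]
      rw [mul_zero, div_eq_inv_mul]
    rcases h2.lt_or_gt with hlt | hlt
    · right; left; rw [ht, abs_of_neg hlt, div_neg, div_self h2]
    · left; rw [ht, abs_of_pos hlt, div_self h2]

lemma v_succ (k : Fin (n+1)) : P.v (k+1) = P.v k + len P k • tang P k := by
  rw [tang, smul_smul, mul_inv_cancel₀ (len_pos P k).ne', one_smul, dvec]
  abel

lemma unitT (k : Fin (n+1)) : (tang P k).1 ^ 2 + (tang P k).2 ^ 2 = 1 := by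
  rcases tform P k with h|h|h|h <;> rw [h] <;> norm_num

lemma decompose (k : Fin (n+1)) (w : ℝ × ℝ) :
    (dot w (tang P k)) • tang P k + (dot w (rot (tang P k))) • rot (tang P k) = w := by
  rcases tform P k with h|h|h|h <;> rw [h] <;>
    simp [dot, rot, Prod.ext_iff] <;> constructor <;> ring

lemma perp (k : Fin (n+1)) : dot (tang P k) (tang P (k+1)) = 0 := by
  have key : dot (dvec P k) (dvec P (k+1)) = 0 := by
    have h2 : k + 1 + 1 = k + 2 := by rw [add_assoc]; norm_num; grind
    rcases P.axis k with h | h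
    · have h' : (P.v (k+1)).2 = (P.v (k+1+1)).2 := by
        rcases P.axis (k+1) with h' | h'
        · rw [h2] at h'; exact absurd h' ((P.alternate k).mp h)
        · exact h'
      have e1 : (dvec P k).1 = 0 := by simp [dvec, h]
      have e2 : (dvec P (k+1)).2 = 0 := by simp [dvec, h']
      simp [dot, e1, e2]
    · have hv : (P.v (k+1)).1 = (P.v (k+1+1)).1 := by
        have h2' : P.v (k+1+1) = P.v (k+2) := by rw [h2]
        rw [h2']
        by_contra h'
        have := (P.alternate k).mpr h'
        exact (P.nondegen k) (Prod.ext this h)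
      have e1 : (dvec P k).2 = 0 := by simp [dvec, h]
      have e2 : (dvec P (k+1)).1 = 0 := by simp [dvec, hv]
      simp [dot, e1, e2]
  rw [tang, tang, dot_smul_smul, key, mul_zero]

lemma crossE_val (k : Fin (n+1)) : crossE P k = 1 ∨ crossE P k = -1 := by
  have hp := perp P k
  unfold crossE
  rcases tform P k with h|h|h|h <;> rcases tform P (k+1) with h'|h'|h'|h' <;>
    rw [h, h'] at hp ⊢ <;> norm_num [dot] at hp <;> norm_num [dot]

lemma tsucc (k : Fin (n+1)) : tang P (k+1) = crossE P k • rot (tang P k) := by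
  have hp := perp P k
  unfold crossE rot
  rcases tform P k with h|h|h|h <;> rcases tform P (k+1) with h'|h'|h'|h' <;>
    rw [h, h'] at hp ⊢ <;> norm_num [dot] at hp <;> norm_num [dot] <;> simp [Prod.ext_iff]

lemma mem_edge_iff {k : Fin (n+1)} {z : ℝ × ℝ} :
    z ∈ P.edge k ↔ ∃ r, r ∈ Icc (0:ℝ) (len P k) ∧ z = P.v k + r • tang P k := by
  have hl := len_pos P k
  have hdv : ∀ θ : ℝ, θ • (P.v (k+1) - P.v k) = (θ * len P k) • tang P k := by
    intro θ
    rw [show P.v (k+1) - P.v k = dvec P k from rfl, ← smul_smul]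
    congr 1
    rw [tang, smul_smul, mul_inv_cancel₀ hl.ne', one_smul]
  rw [RectPolygon.edge, segment_eq_image']
  constructor
  · rintro ⟨θ, hθ, rfl⟩
    refine ⟨θ * len P k, ⟨mul_nonneg hθ.1 hl.le, by nlinarith [hθ.2]⟩, ?_⟩
    show P.v k + θ • (P.v (k+1) - P.v k) = _
    rw [hdv]
  · rintro ⟨r, hr, rfl⟩
    refine ⟨r / len P k, ⟨div_nonneg hr.1 hl.le, by rw [div_le_one hl]; exact hr.2⟩, ?_⟩
    show P.v k + (r / len P k) • (P.v (k+1) - P.v k) = _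
    rw [hdv, div_mul_cancel₀ _ hl.ne']

lemma dot_sT (k : Fin (n+1)) (σ s u : ℝ) (hσ : σ = 1 ∨ σ = -1) :
    dot (s • tang P k + u • nvec P σ k) (tang P k) = s := by
  have hu := unitT P k
  rcases hσ with h|h <;> subst h <;>
    simp only [dot, nvec, rot, Prod.fst_add, Prod.snd_add, Prod.smul_fst, Prod.smul_snd,
      smul_eq_mul, one_smul, neg_smul, Prod.fst_neg, Prod.snd_neg, Prod.mk.injEq] <;>
    linear_combination s * hu

lemma dot_sN (k : Fin (n+1)) (σ s u : ℝ) (hσ : σ = 1 ∨ σ = -1) :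
    dot (s • tang P k + u • nvec P σ k) (nvec P σ k) = u := by
  have hu := unitT P k
  rcases hσ with h|h <;> subst h <;>
    simp only [dot, nvec, rot, Prod.fst_add, Prod.snd_add, Prod.smul_fst, Prod.smul_snd,
      smul_eq_mul, one_smul, neg_smul, Prod.fst_neg, Prod.snd_neg, Prod.mk.injEq] <;>
    linear_combination u * hu

lemma mem_strip_intro {σ δ : ℝ} (hσ : σ = 1 ∨ σ = -1) {k : Fin (n+1)} {s u : ℝ}
    (hs : s ∈ Ioo (-(ext P σ δ k)) (len P k + ext P σ δ (k+1))) (hu : u ∈ Ioo 0 δ) :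
    P.v k + s • tang P k + u • nvec P σ k ∈ strip P σ δ k := by
  have hw : P.v k + s • tang P k + u • nvec P σ k - P.v k
      = s • tang P k + u • nvec P σ k := by abel
  constructor <;> rw [hw]
  · rw [dot_sT P k σ s u hσ]; exact hs
  · rw [dot_sN P k σ s u hσ]; exact hu

lemma mem_strip_elim {σ δ : ℝ} (hσ : σ = 1 ∨ σ = -1) {k : Fin (n+1)} {z : ℝ × ℝ}
    (hz : z ∈ strip P σ δ k) :
    ∃ s u, s ∈ Ioo (-(ext P σ δ k)) (len P k + ext P σ δ (k+1)) ∧ u ∈ Ioo 0 δ ∧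
      z = P.v k + s • tang P k + u • nvec P σ k := by
  obtain ⟨h1, h2⟩ := hz
  refine ⟨dot (z - P.v k) (tang P k), dot (z - P.v k) (nvec P σ k), h1, h2, ?_⟩
  have hd := decompose P k (z - P.v k)
  have hsig : dot (z - P.v k) (nvec P σ k) = σ * dot (z - P.v k) (rot (tang P k)) := by
    rw [nvec, dot_smul_right]
  have hσ2 : σ * σ = 1 := by rcases hσ with h|h <;> rw [h] <;> norm_num
  have h3 : (dot (z - P.v k) (nvec P σ k)) • nvec P σ k
      = (dot (z - P.v k) (rot (tang P k))) • rot (tang P k) := by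
    rw [hsig, nvec, smul_smul]
    congr 1
    linear_combination (dot (z - P.v k) (rot (tang P k))) * hσ2
  rw [h3, add_assoc, hd]
  abel

end
end RectAux

namespace RectAux
open RectPolygon Set
noncomputable section
variable {n : ℕ} (P : RectPolygon n)

structure Good (δ : ℝ) : Prop where
  pos : 0 < δ
  lt_len : ∀ k, δ < len P k
  sep : ∀ k j, j ≠ k → j ≠ k + 1 → j + 1 ≠ k →
    ∀ p ∈ P.edge k, ∀ q ∈ P.edge j, 2*δ ≤ dist p q


lemma dotT' (k : Fin (n+1)) (a b : ℝ) :
    dot (a • tang P k + b • rot (tang P k)) (tang P k) = a := by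
  have hu := unitT P k
  simp only [dot, rot, Prod.fst_add, Prod.snd_add, Prod.smul_fst, Prod.smul_snd,
    smul_eq_mul, Prod.fst_neg, Prod.snd_neg]
  linear_combination a * hu

lemma dotR' (k : Fin (n+1)) (a b : ℝ) :
    dot (a • tang P k + b • rot (tang P k)) (rot (tang P k)) = b := by
  have hu := unitT P k
  simp only [dot, rot, Prod.fst_add, Prod.snd_add, Prod.smul_fst, Prod.smul_snd,
    smul_eq_mul, Prod.fst_neg, Prod.snd_neg]
  linear_combination b * hu

lemma coeff_eq (k : Fin (n+1)) {a b a' b' : ℝ}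
    (h : a • tang P k + b • rot (tang P k) = a' • tang P k + b' • rot (tang P k)) :
    a = a' ∧ b = b' := by
  constructor
  · have := congrArg (fun w => dot w (tang P k)) h
    simpa [dotT'] using this
  · have := congrArg (fun w => dot w (rot (tang P k))) h
    simpa [dotR'] using this

lemma nvec_eq (σ : ℝ) (k : Fin (n+1)) (u : ℝ) :
    u • nvec P σ k = (u * σ) • rot (tang P k) := by
  rw [nvec, smul_smul]

lemma ext_nonneg {σ δ : ℝ} (hδ : 0 < δ) (k : Fin (n+1)) : 0 ≤ ext P σ δ k := by
  rw [ext]; split <;> simp [hδ.le]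

lemma ext_le {σ δ : ℝ} (hδ : 0 < δ) (k : Fin (n+1)) : ext P σ δ k ≤ δ := by
  rw [ext]; split <;> simp [hδ.le]

lemma succ_sub_one (k : Fin (n+1)) : (k + 1) - 1 = k := add_sub_cancel_right k 1

lemma rot_rot (p : ℝ × ℝ) : rot (rot p) = -p := by simp [rot, Prod.ext_iff]

lemma rot_smul (c : ℝ) (p : ℝ × ℝ) : rot (c • p) = c • rot p := by
  simp [rot, Prod.ext_iff, Prod.smul_def]

/-- strip avoids its own edge -/
lemma avoid_self {σ δ : ℝ} (hσ : σ = 1 ∨ σ = -1) {k : Fin (n+1)} {z : ℝ × ℝ}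
    (hz : z ∈ strip P σ δ k) : z ∉ P.edge k := by
  intro hze
  obtain ⟨s, u, hs, hu, rfl⟩ := mem_strip_elim P hσ hz
  obtain ⟨r, hr, heq⟩ := (mem_edge_iff P).mp hze
  have h0 : P.v k + (s • tang P k + u • nvec P σ k) = P.v k + r • tang P k := by
    rw [← add_assoc]; exact heq
  have h2 : s • tang P k + u • nvec P σ k = r • tang P k + (0:ℝ) • rot (tang P k) := by
    rw [zero_smul, add_zero]; exact add_left_cancel h0
  rw [nvec_eq] at h2
  obtain ⟨h1, h2⟩ := coeff_eq P k h2
  have hσ0 : σ ≠ 0 := by rcases hσ with h|h <;> rw [h] <;> norm_num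
  rcases mul_eq_zero.mp h2 with h|h
  · exact (ne_of_gt hu.1) h
  · exact hσ0 h

/-- strip avoids the next edge -/
lemma avoid_next {σ δ : ℝ} (hσ : σ = 1 ∨ σ = -1) {k : Fin (n+1)} {z : ℝ × ℝ}
    (hz : z ∈ strip P σ δ k) : z ∉ P.edge (k+1) := by
  intro hze
  obtain ⟨s, u, hs, hu, rfl⟩ := mem_strip_elim P hσ hz
  obtain ⟨r, hr, heq⟩ := (mem_edge_iff P).mp hze
  rw [v_succ P k, tsucc P k] at heq
  set τ := crossE P k with hτdef
  have key : s • tang P k + u • nvec P σ k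
      = len P k • tang P k + (r * τ) • rot (tang P k) := by
    have h0 : P.v k + (s • tang P k + u • nvec P σ k)
        = P.v k + (len P k • tang P k + (r * τ) • rot (tang P k)) := by
      calc P.v k + (s • tang P k + u • nvec P σ k)
          = P.v k + s • tang P k + u • nvec P σ k := by abel
        _ = P.v k + len P k • tang P k + r • τ • rot (tang P k) := heq
        _ = P.v k + (len P k • tang P k + (r * τ) • rot (tang P k)) := by
            rw [smul_smul]; abel
    exact add_left_cancel h0
  rw [nvec_eq] at key
  obtain ⟨h1, h2⟩ := coeff_eq P k key
  by_cases hc : τ = -σ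
  · -- r * τ = u * σ, τ = -σ  ⇒ r = -u < 0
    have hσσ : σ * σ = 1 := by rcases hσ with h|h <;> rw [h] <;> norm_num
    have hr0 : r = - u := by
      have h3 : u * σ = r * (-σ) := by rw [← hc]; exact h2
      linear_combination σ * h3 - (u + r) * hσσ
    linarith [hr.1, hu.1]
  · -- no extension: s < len, but s = len
    have : ext P σ δ (k+1) = 0 := by
      rw [ext, succ_sub_one]; exact if_neg hc
    rw [this, add_zero] at hs
    exact absurd h1 (ne_of_lt hs.2)

/-- strip avoids the previous edge -/
lemma avoid_prev {σ δ : ℝ} (hσ : σ = 1 ∨ σ = -1) {k : Fin (n+1)} {z : ℝ × ℝ}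
    (hz : z ∈ strip P σ δ k) : z ∉ P.edge (k-1) := by
  intro hze
  obtain ⟨s, u, hs, hu, rfl⟩ := mem_strip_elim P hσ hz
  obtain ⟨r, hr, heq⟩ := (mem_edge_iff P).mp hze
  have hk1 : (k - 1) + 1 = k := sub_add_cancel k 1
  set τ := crossE P (k-1) with hτdef
  have hττ : τ * τ = 1 := by
    rcases crossE_val P (k-1) with h|h <;> rw [← hτdef] at h <;> rw [h] <;> norm_num
  have hσσ : σ * σ = 1 := by rcases hσ with h|h <;> rw [h] <;> norm_num
  have ht : tang P k = τ • rot (tang P (k-1)) := by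
    have := tsucc P (k-1); rw [hk1] at this; exact this
  have htm : tang P (k-1) = (-τ) • rot (tang P k) := by
    rw [ht, rot_smul, rot_rot, smul_neg, smul_neg, smul_smul]
    rw [show -τ * τ = -1 by linear_combination -hττ]
    rw [neg_one_smul, neg_neg]
  have hv : P.v k = P.v (k-1) + len P (k-1) • tang P (k-1) := by
    have := v_succ P (k-1); rw [hk1] at this; exact this
  have key : s • tang P k + u • nvec P σ k
      = (0:ℝ) • tang P k + ((r - len P (k-1)) * (-τ)) • rot (tang P k) := by
    have h0 : P.v k + (s • tang P k + u • nvec P σ k)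
        = P.v k + (((r - len P (k-1)) * (-τ)) • rot (tang P k)) := by
      calc P.v k + (s • tang P k + u • nvec P σ k)
          = P.v k + s • tang P k + u • nvec P σ k := by abel
        _ = P.v (k-1) + r • tang P (k-1) := heq
        _ = P.v k + ((r - len P (k-1)) • tang P (k-1)) := by
            rw [hv, sub_smul]; abel
        _ = P.v k + (((r - len P (k-1)) * (-τ)) • rot (tang P k)) := by
            rw [htm, smul_smul]
    have := add_left_cancel h0
    rw [this, zero_smul, zero_add]
  rw [nvec_eq] at key
  obtain ⟨h1, h2⟩ := coeff_eq P k key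
  by_cases hc : τ = -σ
  · have hru : r - len P (k-1) = u := by
      have h3 : u * σ = (r - len P (k-1)) * σ := by rw [h2, hc]; ring
      linear_combination (-σ) * h3 - ((r - len P (k-1)) - u) * hσσ
    linarith [hr.2, hu.1]
  · have : ext P σ δ k = 0 := by rw [ext]; simp [← hτdef, hc]
    rw [this, neg_zero] at hs
    exact absurd h1.symm (ne_of_lt hs.1)

lemma clamp_mem {s L : ℝ} (hL : 0 ≤ L) : max 0 (min s L) ∈ Icc 0 L := by
  constructor
  · exact le_max_left 0 _
  · rcases le_total s L with h|h <;> simp [min_eq_left, min_eq_right, h, hL]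

lemma norm_tang (k : Fin (n+1)) : ‖tang P k‖ = 1 := by
  rcases tform P k with h|h|h|h <;> rw [h] <;>
    simp [Prod.norm_def, Real.norm_eq_abs]

lemma norm_nvec {σ : ℝ} (hσ : σ = 1 ∨ σ = -1) (k : Fin (n+1)) : ‖nvec P σ k‖ = 1 := by
  have : ‖rot (tang P k)‖ = 1 := by
    rcases tform P k with h|h|h|h <;> rw [h] <;>
      simp [rot, Prod.norm_def, Real.norm_eq_abs]
  rw [nvec, norm_smul, this, mul_one]
  rcases hσ with h|h <;> rw [h] <;> simp

lemma norm_combo {σ : ℝ} (hσ : σ = 1 ∨ σ = -1) (k : Fin (n+1)) (a b : ℝ) :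
    ‖a • tang P k + b • nvec P σ k‖ ≤ |a| + |b| := by
  calc ‖a • tang P k + b • nvec P σ k‖ ≤ ‖a • tang P k‖ + ‖b • nvec P σ k‖ := norm_add_le _ _
    _ = |a| + |b| := by
        rw [norm_smul, norm_smul, norm_tang, norm_nvec P hσ, mul_one, mul_one,
          Real.norm_eq_abs, Real.norm_eq_abs]

/-- strips avoid the whole boundary -/
lemma strip_subset_compl {σ δ : ℝ} (hδ : Good P δ) (hσ : σ = 1 ∨ σ = -1) (k : Fin (n+1)) :
    strip P σ δ k ⊆ P.boundaryᶜ := by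
  intro z hz hzJ
  rw [RectPolygon.boundary, mem_iUnion] at hzJ
  obtain ⟨j, hj⟩ := hzJ
  by_cases e1 : j = k
  · exact avoid_self P hσ hz (e1 ▸ hj)
  by_cases e2 : j = k + 1
  · exact avoid_next P hσ hz (e2 ▸ hj)
  by_cases e3 : j + 1 = k
  · have : j = k - 1 := by rw [← e3, succ_sub_one]
    exact avoid_prev P hσ hz (this ▸ hj)
  -- far case
  have hd := hδ.pos
  obtain ⟨s, u, hs, hu, rfl⟩ := mem_strip_elim P hσ hz
  set z := P.v k + s • tang P k + u • nvec P σ k with hzdef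
  set c := max 0 (min s (len P k)) with hcdef
  have hcm : c ∈ Icc 0 (len P k) := clamp_mem (len_pos P k).le
  have hw : P.v k + c • tang P k ∈ P.edge k := (mem_edge_iff P).mpr ⟨c, hcm, rfl⟩
  have hdist : dist (P.v k + c • tang P k) z < 2*δ := by
    rw [dist_eq_norm]
    have : P.v k + c • tang P k - z = (c - s) • tang P k + (-u) • nvec P σ k := by
      rw [hzdef, sub_smul, neg_smul]; abel
    rw [this]
    have h1 : |c - s| < δ := by
      have hA := ext_le P (σ := σ) hδ.pos k
      have hC := ext_le P (σ := σ) hδ.pos (k+1)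
      have hs1 := hs.1
      have hs2 := hs.2
      rw [abs_lt]
      constructor
      · -- -δ < c - s i.e. s - δ < c : s < len + eC ≤ len + δ, and c ≥ min s len...
        rcases le_total s (len P k) with h|h
        · have : min s (len P k) = s := min_eq_left h
          nlinarith [le_max_right (0:ℝ) (min s (len P k))]
        · have : min s (len P k) = len P k := min_eq_right h
          nlinarith [le_max_right (0:ℝ) (min s (len P k))]
      · -- c - s < δ: c ≤ max 0 s ≤ ... s > -eA ≥ -δ, c ≤ max 0 s
        have : c ≤ max 0 s := by
          apply max_le_max (le_refl 0) (min_le_left _ _)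
        rcases le_total s 0 with h|h
        · have : max (0:ℝ) s = 0 := max_eq_left h
          nlinarith [max_le_max (le_refl (0:ℝ)) (min_le_left s (len P k))]
        · have : max (0:ℝ) s = s := max_eq_right h
          nlinarith [max_le_max (le_refl (0:ℝ)) (min_le_left s (len P k))]
    calc ‖(c - s) • tang P k + (-u) • nvec P σ k‖ ≤ |c - s| + |(-u)| :=
          norm_combo P hσ k _ _
      _ < 2*δ := by
          rw [abs_neg, abs_of_pos hu.1]
          linarith [hu.2]
  have := hδ.sep k j e1 e2 e3 _ hw _ hj
  linarith [hdist]

lemma strip_convex {σ δ : ℝ} (k : Fin (n+1)) : Convex ℝ (strip P σ δ k) := by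
  intro z hz w hw a b ha hb hab
  have key : ∀ q : ℝ × ℝ, dot (a • z + b • w - P.v k) q
      = a * dot (z - P.v k) q + b * dot (w - P.v k) q := by
    intro q
    simp only [dot, Prod.fst_add, Prod.snd_add, Prod.fst_sub, Prod.snd_sub,
      Prod.smul_fst, Prod.smul_snd, smul_eq_mul]
    linear_combination ((P.v k).1 * q.1 + (P.v k).2 * q.2) * hab
  constructor
  · rw [key]; exact convex_Ioo _ _ hz.1 hw.1 ha hb hab
  · rw [key]; exact convex_Ioo _ _ hz.2 hw.2 ha hb hab

def basept (σ δ : ℝ) (k : Fin (n+1)) : ℝ × ℝ :=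
  P.v k + (len P k / 2) • tang P k + (δ/2) • nvec P σ k

lemma basept_mem {σ δ : ℝ} (hδ : Good P δ) (hσ : σ = 1 ∨ σ = -1) (k : Fin (n+1)) :
    basept P σ δ k ∈ strip P σ δ k := by
  apply mem_strip_intro P hσ
  · constructor
    · have := ext_nonneg P hδ.pos (σ := σ) k
      have := len_pos P k
      linarith
    · have := ext_nonneg P hδ.pos (σ := σ) (k+1)
      have := len_pos P k
      linarith
  · constructor <;> linarith [hδ.pos]

lemma base_mem {σ δ : ℝ} (hδ : Good P δ) (hσ : σ = 1 ∨ σ = -1) :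
    base P σ δ ∈ strip P σ δ 0 := basept_mem P hδ hσ 0
lemma overlap {σ δ : ℝ} (hδ : Good P δ) (hσ : σ = 1 ∨ σ = -1) (k : Fin (n+1)) :
    ∃ z, z ∈ strip P σ δ k ∧ z ∈ strip P σ δ (k+1) := by
  set τ := crossE P k with hτdef
  have hττ : τ = 1 ∨ τ = -1 := crossE_val P k
  have hσσ : σ * σ = 1 := by rcases hσ with h|h <;> rw [h] <;> norm_num
  have hd := hδ.pos
  have hLk := hδ.lt_len k
  have hLk1 := hδ.lt_len (k+1)
  have hL := len_pos P k
  have hL1 := len_pos P (k+1)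
  have hextk1 : ext P σ δ (k+1) = (if τ = -σ then δ else 0) := by
    rw [ext, succ_sub_one]
  have ht1 : tang P (k+1) = τ • rot (tang P k) := tsucc P k
  have hn1 : nvec P σ (k+1) = (-(σ*τ)) • tang P k := by
    rw [nvec, ht1, rot_smul, rot_rot]
    match_scalars
    ring
  have hna : ext P σ δ (k+1+1) ≥ 0 := ext_nonneg P (σ := σ) hd _
  have hnb : ext P σ δ k ≥ 0 := ext_nonneg P (σ := σ) hd _
  have hnc : ext P σ δ (k+1) ≥ 0 := ext_nonneg P (σ := σ) hd _
  by_cases hc : τ = -σ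
  · have hστ : σ * τ = -1 := by rw [hc]; linear_combination -hσσ
    refine ⟨P.v k + (len P k + δ/2) • tang P k + (δ/2) • nvec P σ k, ?_, ?_⟩
    · apply mem_strip_intro P hσ
      · constructor
        · linarith
        · rw [hextk1, if_pos hc]; linarith
      · constructor <;> linarith
    · have hzeq : P.v k + (len P k + δ/2) • tang P k + (δ/2) • nvec P σ k
          = P.v (k+1) + (-(δ/2)) • tang P (k+1) + (δ/2) • nvec P σ (k+1) := by
        rw [v_succ P k, ht1, hn1, nvec]
        match_scalars <;>
          first | linear_combination (δ/2) * hστ | linear_combination (δ/2) * hc |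
            linear_combination (-(δ/2)) * hστ | linear_combination (-(δ/2)) * hc | ring
      rw [hzeq]
      apply mem_strip_intro P hσ
      · constructor
        · rw [hextk1, if_pos hc]; linarith
        · linarith
      · constructor <;> linarith
  · have hτσ : τ = σ := by
      rcases hττ with h|h <;> rcases hσ with h'|h' <;> rw [h, h'] <;>
        rw [h, h'] at hc <;> first | rfl | (exfalso; exact hc (by norm_num))
    have hστ : σ * τ = 1 := by rw [hτσ]; exact hσσ
    refine ⟨P.v k + (len P k - δ/2) • tang P k + (δ/2) • nvec P σ k, ?_, ?_⟩
    · apply mem_strip_intro P hσ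
      · constructor
        · linarith
        · linarith
      · constructor <;> linarith
    · have hzeq : P.v k + (len P k - δ/2) • tang P k + (δ/2) • nvec P σ k
          = P.v (k+1) + (δ/2) • tang P (k+1) + (δ/2) • nvec P σ (k+1) := by
        rw [v_succ P k, ht1, hn1, nvec]
        match_scalars <;>
          first | linear_combination (δ/2) * hστ | linear_combination (δ/2) * hτσ |
            linear_combination (-(δ/2)) * hστ | linear_combination (-(δ/2)) * hτσ | ring
      rw [hzeq]
      apply mem_strip_intro P hσ
      · constructor
        · linarith
        · linarith
      · constructor <;> linarith

lemma same_comp {σ δ : ℝ} {k : Fin (n+1)} {z z' : ℝ × ℝ} (hδ : Good P δ)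
    (hσ : σ = 1 ∨ σ = -1) (hz : z ∈ strip P σ δ k) (hz' : z' ∈ strip P σ δ k) :
    connectedComponentIn P.boundaryᶜ z = connectedComponentIn P.boundaryᶜ z' := by
  apply connectedComponentIn_eq
  exact (strip_convex P k).isPreconnected.subset_connectedComponentIn hz
    (strip_subset_compl P hδ hσ k) hz'

open Fin.NatCast in
lemma comp_const {σ δ : ℝ} (hδ : Good P δ) (hσ : σ = 1 ∨ σ = -1) (k : Fin (n+1))
    {z : ℝ × ℝ} (hz : z ∈ strip P σ δ k) :
    connectedComponentIn P.boundaryᶜ z = connectedComponentIn P.boundaryᶜ (base P σ δ) := by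
  have main : ∀ m : ℕ, connectedComponentIn P.boundaryᶜ (basept P σ δ (m : Fin (n+1)))
      = connectedComponentIn P.boundaryᶜ (base P σ δ) := by
    intro m
    induction m with
    | zero => simp [base, basept]
    | succ m ih =>
        obtain ⟨w, hw1, hw2⟩ := overlap P hδ hσ (m : Fin (n+1))
        have e1 := same_comp P hδ hσ (basept_mem P hδ hσ ((m : Fin (n+1)) + 1)) hw2
        have e2 := same_comp P hδ hσ hw1 (basept_mem P hδ hσ (m : Fin (n+1)))
        have : ((m+1 : ℕ) : Fin (n+1)) = (m : Fin (n+1)) + 1 := by push_cast; ring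
        rw [this, e1, e2, ih]
  have hk := main (k : ℕ)
  rw [Fin.cast_val_eq_self] at hk
  exact (same_comp P hδ hσ hz (basept_mem P hδ hσ k)).trans hk

end
end RectAux

namespace RectAux
open RectPolygon Set
noncomputable section

lemma finset_sep {α : Type*} [DecidableEq α] (s : Finset α) (Q : α → ℝ → Prop)
    (hmono : ∀ x m m', 0 < m' → m' ≤ m → Q x m → Q x m')
    (hex : ∀ x ∈ s, ∃ m, 0 < m ∧ Q x m) : ∃ m, 0 < m ∧ ∀ x ∈ s, Q x m := by
  classical
  induction s using Finset.induction with
  | empty => exact ⟨1, one_pos, by simp⟩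
  | insert _ _ hx ih =>
      rename_i a s'
      obtain ⟨m1, hm1, hQ1⟩ := hex _ (Finset.mem_insert_self _ _)
      obtain ⟨m2, hm2, hQ2⟩ := ih (fun x hxs => hex x (Finset.mem_insert_of_mem hxs))
      refine ⟨min m1 m2, lt_min hm1 hm2, ?_⟩
      intro x hxs
      rcases Finset.mem_insert.mp hxs with rfl | hxs
      · exact hmono _ _ _ (lt_min hm1 hm2) (min_le_left _ _) hQ1
      · exact hmono _ _ _ (lt_min hm1 hm2) (min_le_right _ _) (hQ2 _ hxs)

variable {n : ℕ} (P : RectPolygon n)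

lemma edge_compact (k : Fin (n+1)) : IsCompact (P.edge k) := by
  rw [RectPolygon.edge, segment_eq_image']
  exact isCompact_Icc.image (by continuity)

lemma edge_nonempty (k : Fin (n+1)) : (P.edge k).Nonempty :=
  ⟨P.v k, left_mem_segment ℝ _ _⟩

lemma pair_sep {k j : Fin (n+1)} (h : Disjoint (P.edge k) (P.edge j)) :
    ∃ m, 0 < m ∧ ∀ p ∈ P.edge k, ∀ q ∈ P.edge j, m ≤ dist p q := by
  have hc : IsCompact (P.edge k ×ˢ P.edge j) := (edge_compact P k).prod (edge_compact P j)
  have hne : (P.edge k ×ˢ P.edge j).Nonempty :=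
    (edge_nonempty P k).prod (edge_nonempty P j)
  obtain ⟨pq, hpq, hmin⟩ := hc.exists_isMinOn hne
    ((continuous_fst.dist continuous_snd).continuousOn :
      ContinuousOn (fun pq : (ℝ×ℝ) × (ℝ×ℝ) => dist pq.1 pq.2) _)
  refine ⟨dist pq.1 pq.2, ?_, ?_⟩
  · rw [dist_pos]
    intro he
    exact (Set.disjoint_left.mp h (hpq.1)) (he ▸ hpq.2)
  · intro p hp q hq
    exact hmin (Set.mk_mem_prod hp hq)

lemma exists_good : ∃ δ, Good P δ := by
  classical
  have hne : (Finset.univ : Finset (Fin (n+1))).Nonempty := Finset.univ_nonempty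
  set L0 := Finset.univ.inf' hne (len P) with hL0
  have hL0pos : 0 < L0 := by
    rw [hL0, Finset.lt_inf'_iff]
    exact fun k _ => len_pos P k
  set S : Finset (Fin (n+1) × Fin (n+1)) :=
    Finset.univ.filter (fun pr => pr.2 ≠ pr.1 ∧ pr.2 ≠ pr.1 + 1 ∧ pr.2 + 1 ≠ pr.1) with hS
  have hsep : ∃ m, 0 < m ∧ ∀ pr ∈ S,
      ∀ p ∈ P.edge pr.1, ∀ q ∈ P.edge pr.2, m ≤ dist p q := by
    apply finset_sep S
    · intro pr m m' hm' hle hQ p hp q hq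
      exact le_trans hle (hQ p hp q hq)
    · intro pr hpr
      rw [hS, Finset.mem_filter] at hpr
      obtain ⟨-, h1, h2, h3⟩ := hpr
      exact pair_sep P (P.simple pr.1 pr.2 h1 h2 h3)
  obtain ⟨m, hm, hmsep⟩ := hsep
  refine ⟨min (m/2) (L0/2), ?_, ?_, ?_⟩
  · positivity
  · intro k
    have : L0 ≤ len P k := Finset.inf'_le _ (Finset.mem_univ k)
    calc min (m/2) (L0/2) ≤ L0/2 := min_le_right _ _
      _ < len P k := by linarith
  · intro k j h1 h2 h3 p hp q hq
    have : (k, j) ∈ S := by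
      rw [hS, Finset.mem_filter]
      exact ⟨Finset.mem_univ _, h1, h2, h3⟩
    calc 2 * min (m/2) (L0/2) ≤ 2 * (m/2) := by
          have := min_le_left (m/2) (L0/2); linarith
      _ = m := by ring
      _ ≤ dist p q := hmsep _ this p hp q hq

def mn (k : Fin (n+1)) : ℝ := min (P.v k).1 (P.v (k+1)).1
def mx (k : Fin (n+1)) : ℝ := max (P.v k).1 (P.v (k+1)).1
def yl (k : Fin (n+1)) : ℝ := (P.v k).2
def sg (k : Fin (n+1)) : ℝ := if (P.v k).1 < (P.v (k+1)).1 then 1 else -1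
def KK (x : ℝ) : Finset (Fin (n+1)) :=
  Finset.univ.filter (fun k => mn P k < x ∧ x < mx P k)
def genX (x : ℝ) : Prop := ∀ k, x ≠ (P.v k).1

lemma sg_val (k : Fin (n+1)) : sg P k = 1 ∨ sg P k = -1 := by
  rw [sg]; split <;> simp

lemma K_not_vert {x : ℝ} {k : Fin (n+1)} (hk : k ∈ KK P x) :
    (P.v k).1 ≠ (P.v (k+1)).1 := by
  rw [KK, Finset.mem_filter] at hk
  intro h
  rw [mn, mx, h, min_self, max_self] at hk
  exact absurd (hk.2.1.trans hk.2.2) (lt_irrefl _)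

lemma mem_K_horiz {x : ℝ} {k : Fin (n+1)} (hk : k ∈ KK P x) :
    (P.v k).2 = (P.v (k+1)).2 := by
  rcases P.axis k with h | h
  · exact absurd h (K_not_vert P hk)
  · exact h

lemma edge_param {k : Fin (n+1)} {z : ℝ × ℝ} (hz : z ∈ P.edge k) :
    ∃ θ ∈ Icc (0:ℝ) 1, z = P.v k + θ • (P.v (k+1) - P.v k) := by
  rw [RectPolygon.edge, segment_eq_image'] at hz
  obtain ⟨θ, h1, h2⟩ := hz
  exact ⟨θ, h1, h2.symm⟩

lemma lineJ {x y : ℝ} (hx : genX P x) (h : (x, y) ∈ P.boundary) :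
    ∃ k ∈ KK P x, y = yl P k := by
  rw [RectPolygon.boundary, mem_iUnion] at h
  obtain ⟨j, hj⟩ := h
  obtain ⟨θ, hθ, heq⟩ := edge_param P hj
  have hx1 : x = (P.v j).1 + θ * ((P.v (j+1)).1 - (P.v j).1) := by
    have := congrArg Prod.fst heq
    simpa using this
  have hy1 : y = (P.v j).2 + θ * ((P.v (j+1)).2 - (P.v j).2) := by
    have := congrArg Prod.snd heq
    simpa using this
  rcases P.axis j with h | h
  · exfalso
    apply hx j
    rw [hx1, ← h]; ring
  · refine ⟨j, ?_, ?_⟩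
    · rw [KK, Finset.mem_filter]
      refine ⟨Finset.mem_univ _, ?_, ?_⟩
      · -- mn < x
        rcases lt_trichotomy (P.v j).1 (P.v (j+1)).1 with hlt | heq' | hlt
        · rw [mn, min_eq_left hlt.le]
          rcases eq_or_lt_of_le hθ.1 with h0 | h0
          · exfalso; apply hx j; rw [hx1, ← h0]; ring
          · nlinarith
        · exfalso; apply hx j; rw [hx1, heq']; ring
        · rw [mn, min_eq_right hlt.le]
          rcases eq_or_lt_of_le hθ.2 with h1 | h1
          · exfalso
            apply hx (j+1)
            rw [hx1, h1]; ring
          · nlinarith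
      · rcases lt_trichotomy (P.v j).1 (P.v (j+1)).1 with hlt | heq' | hlt
        · rw [mx, max_eq_right hlt.le]
          rcases eq_or_lt_of_le hθ.2 with h1 | h1
          · exfalso; apply hx (j+1); rw [hx1, h1]; ring
          · nlinarith
        · exfalso; apply hx j; rw [hx1, heq']; ring
        · rw [mx, max_eq_left hlt.le]
          rcases eq_or_lt_of_le hθ.1 with h0 | h0
          · exfalso; apply hx j; rw [hx1, ← h0]; ring
          · nlinarith
    · rw [yl, hy1, h]; ring

lemma mem_edge_of_K {x : ℝ} {k : Fin (n+1)} (hk : k ∈ KK P x) :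
    (x, yl P k) ∈ P.edge k := by
  have hne := K_not_vert P hk
  have hy := mem_K_horiz P hk
  rw [KK, Finset.mem_filter] at hk
  obtain ⟨-, h1, h2⟩ := hk
  have hd : (P.v (k+1)).1 - (P.v k).1 ≠ 0 := fun h => hne (by linarith [sub_eq_zero.mp h])
  set θ := (x - (P.v k).1) / ((P.v (k+1)).1 - (P.v k).1) with hθdef
  have key : θ * ((P.v (k+1)).1 - (P.v k).1) = x - (P.v k).1 := div_mul_cancel₀ _ hd
  have hbounds : θ ∈ Icc (0:ℝ) 1 := by
    rcases lt_or_gt_of_ne hne with hlt | hlt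
    · rw [mn, min_eq_left hlt.le] at h1
      rw [mx, max_eq_right hlt.le] at h2
      constructor
      · apply div_nonneg <;> linarith
      · rw [hθdef, div_le_one (by linarith)]; linarith
    · rw [mn, min_eq_right hlt.le] at h1
      rw [mx, max_eq_left hlt.le] at h2
      constructor
      · rw [hθdef, div_nonneg_iff]
        right; exact ⟨by linarith, by linarith⟩
      · rw [hθdef, div_le_one_iff]
        right; right; exact ⟨by linarith, by linarith⟩
  rw [RectPolygon.edge, segment_eq_image']
  refine ⟨θ, hbounds, ?_⟩
  apply Prod.ext
  · simp only [Prod.fst_add, Prod.smul_fst, Prod.fst_sub, smul_eq_mul]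
    linarith [key]
  · simp only [Prod.snd_add, Prod.smul_snd, Prod.snd_sub, smul_eq_mul]
    rw [yl, ← hy]
    ring

lemma levels_inj {x : ℝ} {k k' : Fin (n+1)} (hk : k ∈ KK P x) (hk' : k' ∈ KK P x)
    (h : yl P k = yl P k') : k = k' := by
  by_contra hne
  have h2p : ∀ j : Fin (n+1), j + 1 + 1 = j + 2 := by
    intro j; rw [add_assoc]; norm_num; grind
  -- adjacent edges to a non-vertical edge are vertical
  have hvert_succ : ∀ j : Fin (n+1), (P.v j).1 ≠ (P.v (j+1)).1 →
      (P.v (j+1)).1 = (P.v (j+1+1)).1 := by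
    intro j hj
    rw [h2p j]
    by_contra hc
    exact hj ((P.alternate j).mpr hc)
  have e1 : k' ≠ k := hne ∘ Eq.symm
  have e2 : k' ≠ k + 1 := by
    intro he
    apply K_not_vert P hk'
    rw [he]
    exact hvert_succ k (K_not_vert P hk)
  have e3 : k' + 1 ≠ k := by
    intro he
    apply K_not_vert P hk
    rw [← he]
    exact hvert_succ k' (K_not_vert P hk')
  have hdisj := P.simple k k' e1 e2 e3
  have p1 := mem_edge_of_K P hk
  have p2 := mem_edge_of_K P hk'
  rw [h] at p1
  exact Set.disjoint_left.mp hdisj p1 p2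

lemma tang_right {k : Fin (n+1)} (hx : (P.v k).1 < (P.v (k+1)).1) : tang P k = (1, 0) := by
  have h1 : 0 < (dvec P k).1 := by simp [dvec]; linarith
  have h2 : 0 < (tang P k).1 := by
    rw [tang, Prod.smul_fst, smul_eq_mul]
    exact mul_pos (inv_pos.mpr (len_pos P k)) h1
  rcases tform P k with h|h|h|h <;> rw [h] at h2 ⊢ <;> norm_num at h2

lemma tang_left {k : Fin (n+1)} (hx : (P.v (k+1)).1 < (P.v k).1) : tang P k = (-1, 0) := by
  have h1 : (dvec P k).1 < 0 := by simp [dvec]; linarith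
  have h2 : (tang P k).1 < 0 := by
    rw [tang, Prod.smul_fst, smul_eq_mul]
    exact mul_neg_of_pos_of_neg (inv_pos.mpr (len_pos P k)) h1
  rcases tform P k with h|h|h|h <;> rw [h] at h2 ⊢ <;> norm_num at h2

lemma len_right {k : Fin (n+1)} (hx : (P.v k).1 < (P.v (k+1)).1) :
    len P k = (P.v (k+1)).1 - (P.v k).1 := by
  have := congrArg Prod.fst (v_succ P k)
  rw [tang_right P hx] at this
  simp at this
  linarith

lemma len_left {k : Fin (n+1)} (hx : (P.v (k+1)).1 < (P.v k).1) :
    len P k = (P.v k).1 - (P.v (k+1)).1 := by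
  have := congrArg Prod.fst (v_succ P k)
  rw [tang_left P hx] at this
  simp at this
  linarith

lemma side_above {x : ℝ} {k : Fin (n+1)} (hk : k ∈ KK P x) {s δ : ℝ}
    (h0 : 0 < s) (h1 : s < δ) (hgood : Good P δ) :
    (x, yl P k + s) ∈ strip P (sg P k) δ k := by
  have hne := K_not_vert P hk
  have hmem := hk
  rw [KK, Finset.mem_filter] at hmem
  obtain ⟨-, hm1, hm2⟩ := hmem
  have hextA := ext_nonneg P (σ := sg P k) hgood.pos k
  have hextC := ext_nonneg P (σ := sg P k) hgood.pos (k+1)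
  have hw : ((x, yl P k + s) : ℝ × ℝ) - P.v k = (x - (P.v k).1, s) := by
    apply Prod.ext
    · simp
    · simp [yl]
  rcases lt_or_gt_of_ne hne with hlt | hlt
  · have hsg : sg P k = 1 := if_pos hlt
    have ht := tang_right P hlt
    have hlen := len_right P hlt
    have hnv : nvec P (sg P k) k = ((0:ℝ), (1:ℝ)) := by
      rw [hsg, nvec, ht]; norm_num [rot, Prod.smul_def, Prod.ext_iff]
    rw [mn, min_eq_left hlt.le] at hm1
    rw [mx, max_eq_right hlt.le] at hm2
    refine ⟨?_, ?_⟩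
    · rw [hw, ht, mem_Ioo]
      simp only [dot]
      constructor <;> [nlinarith; nlinarith]
    · rw [hw, hnv, mem_Ioo]
      simp only [dot]
      constructor <;> [nlinarith; nlinarith]
  · have hsg : sg P k = -1 := if_neg (by intro hc; exact absurd hc (not_lt.mpr hlt.le))
    have ht := tang_left P hlt
    have hlen := len_left P hlt
    have hnv : nvec P (sg P k) k = ((0:ℝ), (1:ℝ)) := by
      rw [hsg, nvec, ht]; norm_num [rot, Prod.smul_def, Prod.ext_iff]
    rw [mn, min_eq_right hlt.le] at hm1
    rw [mx, max_eq_left hlt.le] at hm2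
    refine ⟨?_, ?_⟩
    · rw [hw, ht, mem_Ioo]
      simp only [dot]
      constructor <;> [nlinarith; nlinarith]
    · rw [hw, hnv, mem_Ioo]
      simp only [dot]
      constructor <;> [nlinarith; nlinarith]

lemma side_below {x : ℝ} {k : Fin (n+1)} (hk : k ∈ KK P x) {s δ : ℝ}
    (h0 : 0 < s) (h1 : s < δ) (hgood : Good P δ) :
    (x, yl P k - s) ∈ strip P (-sg P k) δ k := by
  have hne := K_not_vert P hk
  have hmem := hk
  rw [KK, Finset.mem_filter] at hmem
  obtain ⟨-, hm1, hm2⟩ := hmem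
  have hextA := ext_nonneg P (σ := -sg P k) hgood.pos k
  have hextC := ext_nonneg P (σ := -sg P k) hgood.pos (k+1)
  have hw : ((x, yl P k - s) : ℝ × ℝ) - P.v k = (x - (P.v k).1, -s) := by
    apply Prod.ext
    · simp
    · simp [yl]
  rcases lt_or_gt_of_ne hne with hlt | hlt
  · have hsg : sg P k = 1 := if_pos hlt
    have ht := tang_right P hlt
    have hlen := len_right P hlt
    have hnv : nvec P (-sg P k) k = ((0:ℝ), (-1:ℝ)) := by
      rw [hsg, nvec, ht]; norm_num [rot, Prod.smul_def, Prod.ext_iff]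
    rw [mn, min_eq_left hlt.le] at hm1
    rw [mx, max_eq_right hlt.le] at hm2
    refine ⟨?_, ?_⟩
    · rw [hw, ht, mem_Ioo]
      simp only [dot]
      constructor <;> [nlinarith; nlinarith]
    · rw [hw, hnv, mem_Ioo]
      simp only [dot]
      constructor <;> [nlinarith; nlinarith]
  · have hsg : sg P k = -1 := if_neg (by intro hc; exact absurd hc (not_lt.mpr hlt.le))
    have ht := tang_left P hlt
    have hlen := len_left P hlt
    have hnv : nvec P (-sg P k) k = ((0:ℝ), (-1:ℝ)) := by
      rw [hsg, nvec, ht]; norm_num [rot, Prod.smul_def, Prod.ext_iff]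
    rw [mn, min_eq_right hlt.le] at hm1
    rw [mx, max_eq_left hlt.le] at hm2
    refine ⟨?_, ?_⟩
    · rw [hw, ht, mem_Ioo]
      simp only [dot]
      constructor <;> [nlinarith; nlinarith]
    · rw [hw, hnv, mem_Ioo]
      simp only [dot]
      constructor <;> [nlinarith; nlinarith]

lemma comp_eq_of_mem {F S : Set (ℝ×ℝ)} {z z' : ℝ×ℝ} (hS : IsPreconnected S)
    (hsub : S ⊆ F) (hz : z ∈ S) (hz' : z' ∈ S) :
    connectedComponentIn F z = connectedComponentIn F z' :=
  connectedComponentIn_eq (hS.subset_connectedComponentIn hz hsub hz')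

lemma ray_up {x y0 : ℝ} (hx : genX P x) (h : ∀ k ∈ KK P x, yl P k < y0) :
    ¬ Bornology.IsBounded (connectedComponentIn P.boundaryᶜ (x, y0)) := by
  intro hb
  set R : Set (ℝ×ℝ) := (fun y => ((x, y) : ℝ×ℝ)) '' Ici y0 with hR
  have hRsub : R ⊆ P.boundaryᶜ := by
    rintro - ⟨y, hy, rfl⟩ hmem
    obtain ⟨k, hk, hyk⟩ := lineJ P hx hmem
    have := h k hk
    rw [← hyk] at this
    exact absurd hy (not_le.mpr this)
  have hRconn : IsPreconnected R :=
    isPreconnected_Ici.image _ (Continuous.prodMk_right x).continuousOn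
  have hzR : ((x, y0) : ℝ×ℝ) ∈ R := ⟨y0, self_mem_Ici, rfl⟩
  have hRc : R ⊆ connectedComponentIn P.boundaryᶜ (x, y0) :=
    hRconn.subset_connectedComponentIn hzR hRsub
  obtain ⟨r, hr⟩ := (Metric.isBounded_iff_subset_closedBall 0).mp hb
  set y1 := max y0 (|r| + 1) with hy1
  have h1 : ((x, y1) : ℝ×ℝ) ∈ R := ⟨y1, mem_Ici.mpr (le_max_left y0 (|r| + 1)), rfl⟩
  have h2 := hr (hRc h1)
  rw [Metric.mem_closedBall, Prod.dist_eq] at h2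
  have h3 : dist y1 (0:ℝ) ≤ r := le_trans (le_max_right _ _) h2
  rw [Real.dist_eq, sub_zero] at h3
  have h4 : |r| + 1 ≤ y1 := le_max_right _ _
  have h5 : y1 ≤ |y1| := le_abs_self _
  have h6 : r ≤ |r| := le_abs_self _
  linarith

lemma ray_down {x y0 : ℝ} (hx : genX P x) (h : ∀ k ∈ KK P x, y0 < yl P k) :
    ¬ Bornology.IsBounded (connectedComponentIn P.boundaryᶜ (x, y0)) := by
  intro hb
  set R : Set (ℝ×ℝ) := (fun y => ((x, y) : ℝ×ℝ)) '' Iic y0 with hR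
  have hRsub : R ⊆ P.boundaryᶜ := by
    rintro - ⟨y, hy, rfl⟩ hmem
    obtain ⟨k, hk, hyk⟩ := lineJ P hx hmem
    have := h k hk
    rw [← hyk] at this
    exact absurd hy (not_le.mpr this)
  have hRconn : IsPreconnected R :=
    isPreconnected_Iic.image _ (Continuous.prodMk_right x).continuousOn
  have hzR : ((x, y0) : ℝ×ℝ) ∈ R := ⟨y0, self_mem_Iic, rfl⟩
  have hRc : R ⊆ connectedComponentIn P.boundaryᶜ (x, y0) :=
    hRconn.subset_connectedComponentIn hzR hRsub
  obtain ⟨r, hr⟩ := (Metric.isBounded_iff_subset_closedBall 0).mp hb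
  set y1 := min y0 (-(|r| + 1)) with hy1
  have h1 : ((x, y1) : ℝ×ℝ) ∈ R := ⟨y1, mem_Iic.mpr (min_le_left _ _), rfl⟩
  have h2 := hr (hRc h1)
  rw [Metric.mem_closedBall, Prod.dist_eq] at h2
  have h3 : dist y1 (0:ℝ) ≤ r := le_trans (le_max_right _ _) h2
  rw [Real.dist_eq, sub_zero] at h3
  have h4 : y1 ≤ -(|r| + 1) := min_le_right _ _
  have h5 : -y1 ≤ |y1| := neg_le_abs _
  have h6 : r ≤ |r| := le_abs_self _
  linarith

lemma seg_comp {x a b y y' : ℝ} (hx : genX P x) (h : ∀ k ∈ KK P x, yl P k ∉ Ioo a b)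
    (hy : y ∈ Ioo a b) (hy' : y' ∈ Ioo a b) :
    connectedComponentIn P.boundaryᶜ (x, y) = connectedComponentIn P.boundaryᶜ (x, y') := by
  apply comp_eq_of_mem (S := (fun y => ((x, y) : ℝ×ℝ)) '' Ioo a b)
  · exact isPreconnected_Ioo.image _ (Continuous.prodMk_right x).continuousOn
  · rintro - ⟨yy, hyy, rfl⟩ hmem
    obtain ⟨k, hk, hyk⟩ := lineJ P hx hmem
    exact h k hk (hyk ▸ hyy)
  · exact ⟨y, hy, rfl⟩
  · exact ⟨y', hy', rfl⟩

lemma exists_genX_K_nonempty : ∃ x, genX P x ∧ (KK P x).Nonempty := by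
  classical
  obtain ⟨k, hk⟩ : ∃ k : Fin (n+1), (P.v k).1 ≠ (P.v (k+1)).1 := by
    by_cases h0 : (P.v 0).1 = (P.v (0+1)).1
    · refine ⟨0+1, ?_⟩
      have := (P.alternate 0).mp h0
      have e2 : (0:Fin (n+1)) + 2 = 0 + 1 + 1 := by grind
      rw [e2] at this
      exact this
    · exact ⟨0, h0⟩
  have hlt : mn P k < mx P k := by
    rcases lt_or_gt_of_ne hk with h|h
    · rw [mn, mx, min_eq_left h.le, max_eq_right h.le]; exact h
    · rw [mn, mx, min_eq_right h.le, max_eq_left h.le]; exact h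
  obtain ⟨x, hx1, hx2⟩ := (Set.Ioo_infinite hlt).exists_notMem_finset
      (Finset.univ.image (fun i => (P.v i).1))
  refine ⟨x, ?_, ⟨k, ?_⟩⟩
  · intro i he
    exact hx2 (Finset.mem_image.mpr ⟨i, Finset.mem_univ _, he.symm⟩)
  · rw [KK, Finset.mem_filter]; exact ⟨Finset.mem_univ _, hx1.1, hx1.2⟩

end
end RectAux

namespace RectAux
open RectPolygon Set
noncomputable section

lemma alt_sum_aux {ι : Type*} [DecidableEq ι] (y s : ι → ℝ) :
    ∀ (N : ℕ) (K : Finset ι), K.card ≤ N →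
    (∀ k ∈ K, ∀ k' ∈ K, y k = y k' → k = k') →
    (∀ k ∈ K, ∀ k' ∈ K, y k < y k' → (∀ j ∈ K, ¬(y k < y j ∧ y j < y k')) → s k' = -s k) →
    (∀ k ∈ K, (∀ j ∈ K, y j ≤ y k) → s k = -1) →
    (∀ k ∈ K, (∀ j ∈ K, y k ≤ y j) → s k = 1) →
    ∑ k ∈ K, s k * y k ≤ 0 := by
  intro N
  induction N with
  | zero =>
      intro K hc _ _ _ _
      rw [Nat.le_zero, Finset.card_eq_zero] at hc
      subst hc; simp
  | succ N ih =>
      intro K hc hinj halt htop hbot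
      rcases K.eq_empty_or_nonempty with rfl | hne
      · simp
      obtain ⟨k1, hk1K, hk1min⟩ := K.exists_min_image y hne
      have hsk1 : s k1 = 1 := hbot k1 hk1K (fun j hj => hk1min j hj)
      rcases (K.erase k1).eq_empty_or_nonempty with he | hne2
      · -- K = {k1}
        exfalso
        have hall : ∀ j ∈ K, j = k1 := by
          intro j hj
          by_contra hne'
          exact (Finset.notMem_empty j) (he ▸ Finset.mem_erase.mpr ⟨hne', hj⟩)
        have hsk1' : s k1 = -1 := htop k1 hk1K (fun j hj => by rw [hall j hj])
        rw [hsk1] at hsk1'; norm_num at hsk1'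
      obtain ⟨k2, hk2K', hk2min⟩ := (K.erase k1).exists_min_image y hne2
      have hk2K : k2 ∈ K := Finset.mem_of_mem_erase hk2K'
      have hk2ne : k2 ≠ k1 := (Finset.mem_erase.mp hk2K').1
      have h12 : y k1 < y k2 := by
        rcases lt_or_eq_of_le (hk1min k2 hk2K) with h | h
        · exact h
        · exact absurd (hinj k1 hk1K k2 hk2K h) (Ne.symm hk2ne)
      have hadj12 : ∀ j ∈ K, ¬(y k1 < y j ∧ y j < y k2) := by
        intro j hj ⟨ha, hb⟩
        have hjne : j ≠ k1 := fun he' => by rw [he'] at ha; exact lt_irrefl _ ha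
        exact absurd (hk2min j (Finset.mem_erase.mpr ⟨hjne, hj⟩)) (not_le.mpr hb)
      have hsk2 : s k2 = -1 := by
        rw [halt k1 hk1K k2 hk2K h12 hadj12, hsk1]
      set K'' := (K.erase k1).erase k2 with hK''
      have hsub : K'' ⊆ K := fun {j} hj =>
        Finset.mem_of_mem_erase (Finset.mem_of_mem_erase hj)
      have hyk2le : ∀ j ∈ K'', y k2 ≤ y j := fun j hj =>
        hk2min j (Finset.mem_of_mem_erase hj)
      have hyk2lt : ∀ j ∈ K'', y k2 < y j := by
        intro j hj
        rcases lt_or_eq_of_le (hyk2le j hj) with h | h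
        · exact h
        · exact absurd (hinj k2 hk2K j (hsub hj) h) (Ne.symm (Finset.mem_erase.mp hj).1)
      have hIH : ∑ k ∈ K'', s k * y k ≤ 0 := by
        apply ih K''
        · have h0 : K''.card = ((K.erase k1).erase k2).card := by rw [hK'']
          have h1 := Finset.card_erase_lt_of_mem hk2K'
          have h2 := Finset.card_erase_lt_of_mem hk1K
          omega
        · intro k hk k' hk' hyy
          exact hinj k (hsub hk) k' (hsub hk') hyy
        · intro k hk k' hk' hlt hbetween
          apply halt k (hsub hk) k' (hsub hk') hlt
          intro j hj ⟨ha, hb⟩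
          have hj1 : j ≠ k1 := by
            intro he'; rw [he'] at ha
            exact absurd (hk1min k (hsub hk)) (not_le.mpr ha)
          have hj2 : j ≠ k2 := by
            intro he'; rw [he'] at ha
            exact absurd (hyk2le k hk) (not_le.mpr ha)
          exact hbetween j (Finset.mem_erase.mpr ⟨hj2, Finset.mem_erase.mpr ⟨hj1, hj⟩⟩) ⟨ha, hb⟩
        · intro k hk hmax
          apply htop k (hsub hk)
          intro j hj
          by_cases hj1 : j = k1
          · subst hj1; exact le_trans (hk1min k (hsub hk)) (le_refl _)
          by_cases hj2 : j = k2
          · subst hj2; exact hyk2le k hk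
          · exact hmax j (Finset.mem_erase.mpr ⟨hj2, Finset.mem_erase.mpr ⟨hj1, hj⟩⟩)
        · intro k hk hmin
          have hadj2k : ∀ j ∈ K, ¬(y k2 < y j ∧ y j < y k) := by
            intro j hj ⟨ha, hb⟩
            have hj1 : j ≠ k1 := by
              intro he'; rw [he'] at ha
              exact absurd (hk1min k2 hk2K) (not_le.mpr ha)
            have hj2 : j ≠ k2 := by
              intro he'; rw [he'] at ha; exact lt_irrefl _ ha
            have : j ∈ K'' := Finset.mem_erase.mpr ⟨hj2, Finset.mem_erase.mpr ⟨hj1, hj⟩⟩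
            exact absurd (hmin j this) (not_le.mpr hb)
          rw [halt k2 hk2K k (hsub hk) (hyk2lt k hk) hadj2k, hsk2]
          norm_num
      have hsum : ∑ k ∈ K, s k * y k
          = s k1 * y k1 + (s k2 * y k2 + ∑ k ∈ K'', s k * y k) := by
        rw [← Finset.add_sum_erase _ _ hk1K, ← Finset.add_sum_erase _ _ hk2K', hK'']
      rw [hsum, hsk1, hsk2]
      nlinarith [h12.le, hIH]

variable {n : ℕ} (P : RectPolygon n)

lemma g_eq_sum (x : ℝ) :
    (∑ k : Fin (n+1), (Ioo (mn P k) (mx P k)).indicator (fun _ => sg P k * yl P k) x) =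
      ∑ k ∈ KK P x, sg P k * yl P k := by
  rw [KK, Finset.sum_filter]
  apply Finset.sum_congr rfl
  intro k _
  rw [Set.indicator_apply]
  simp [mem_Ioo]

lemma integral_g :
    (∫ x : ℝ, (∑ k : Fin (n+1), (Ioo (mn P k) (mx P k)).indicator
        (fun _ => sg P k * yl P k) x)) =
      ∑ k : Fin (n+1), ((P.v (k+1)).1 - (P.v k).1) * yl P k := by
  rw [MeasureTheory.integral_finset_sum]
  · apply Finset.sum_congr rfl
    intro k _
    rw [MeasureTheory.integral_indicator_const _ measurableSet_Ioo]
    rw [Real.volume_real_Ioo, smul_eq_mul]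
    rcases lt_or_ge (P.v k).1 (P.v (k+1)).1 with h | h
    · rw [sg, if_pos h, mn, mx, min_eq_left h.le, max_eq_right h.le]
      rw [max_eq_left (by linarith)]
      ring
    · rw [sg, if_neg (not_lt.mpr h), mn, mx, min_eq_right h, max_eq_left h]
      rw [max_eq_left (by linarith)]
      ring
  · intro k _
    rw [MeasureTheory.integrable_indicator_iff measurableSet_Ioo]
    apply (MeasureTheory.integrableOn_const_iff).mpr
    right
    exact measure_Ioo_lt_top

lemma shoelace :
    0 < ∑ k : Fin (n+1), ((P.v (k+1)).1 - (P.v k).1) * yl P k := by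
  have hcw := P.clockwise
  have tele : ∑ i : Fin (n+1), ((P.v (i+1)).1 * (P.v (i+1)).2)
      = ∑ i : Fin (n+1), ((P.v i).1 * (P.v i).2) :=
    Fintype.sum_equiv (Equiv.addRight (1 : Fin (n+1)))
      (fun i => (P.v (i+1)).1 * (P.v (i+1)).2) (fun i => (P.v i).1 * (P.v i).2)
      (fun i => rfl)
  have expand : ∀ i : Fin (n+1), (P.v i).1 * (P.v (i+1)).2 - (P.v (i+1)).1 * (P.v i).2
      = (-2 * (((P.v (i+1)).1 - (P.v i).1) * yl P i)
          - ((P.v i).1 * (P.v i).2)) + ((P.v (i+1)).1 * (P.v (i+1)).2) := by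
    intro i
    rcases P.axis i with h|h
    · rw [yl, ← h]; ring
    · rw [yl, ← h]; ring
  rw [Finset.sum_congr rfl (fun i _ => expand i)] at hcw
  rw [Finset.sum_add_distrib, Finset.sum_sub_distrib, tele] at hcw
  rw [← Finset.mul_sum] at hcw
  nlinarith [hcw]

end
end RectAux

namespace RectAux
open RectPolygon Set
noncomputable section
variable {n : ℕ} (P : RectPolygon n)

lemma neg_sg_val (k : Fin (n+1)) : -sg P k = 1 ∨ -sg P k = -1 := by
  rcases sg_val P k with h|h <;> rw [h] <;> norm_num

lemma master {δ : ℝ} (hδ : Good P δ) :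
    ¬ Bornology.IsBounded (connectedComponentIn P.boundaryᶜ (base P 1 δ)) := by
  classical
  intro hb
  have hd := hδ.pos
  have hσ1 : (1:ℝ) = 1 ∨ (1:ℝ) = -1 := Or.inl rfl
  have hσm : (-1:ℝ) = 1 ∨ (-1:ℝ) = -1 := Or.inr rfl
  have stepTop : ∀ x, genX P x → ∀ k ∈ KK P x, (∀ j ∈ KK P x, yl P j ≤ yl P k) →
      sg P k = -1 := by
    intro x hx k hk htopk
    rcases sg_val P k with hsgv | hsgv
    swap
    · exact hsgv
    exfalso
    have hzs : ((x, yl P k + δ/2) : ℝ×ℝ) ∈ strip P (sg P k) δ k :=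
      side_above P hk (by linarith) (by linarith) hδ
    rw [hsgv] at hzs
    have hcomp := comp_const P hδ hσ1 k hzs
    apply ray_up P hx (y0 := yl P k + δ/2) (fun j hj => by linarith [htopk j hj])
    rw [hcomp]
    exact hb
  have stepBot : ∀ x, genX P x → ∀ k ∈ KK P x, (∀ j ∈ KK P x, yl P k ≤ yl P j) →
      sg P k = 1 := by
    intro x hx k hk hbotk
    rcases sg_val P k with hsgv | hsgv
    · exact hsgv
    exfalso
    have hzs : ((x, yl P k - δ/2) : ℝ×ℝ) ∈ strip P (-sg P k) δ k :=
      side_below P hk (by linarith) (by linarith) hδ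
    rw [hsgv, neg_neg] at hzs
    have hcomp := comp_const P hδ hσ1 k hzs
    apply ray_down P hx (y0 := yl P k - δ/2) (fun j hj => by linarith [hbotk j hj])
    rw [hcomp]
    exact hb
  have stepNe : connectedComponentIn P.boundaryᶜ (base P (-1) δ)
      ≠ connectedComponentIn P.boundaryᶜ (base P 1 δ) := by
    intro he
    obtain ⟨x, hx, hKne⟩ := exists_genX_K_nonempty P
    obtain ⟨kt, hktK, hktmax⟩ := (KK P x).exists_max_image (yl P) hKne
    have hsgt := stepTop x hx kt hktK hktmax
    have hzs : ((x, yl P kt + δ/2) : ℝ×ℝ) ∈ strip P (sg P kt) δ kt :=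
      side_above P hktK (by linarith) (by linarith) hδ
    rw [hsgt] at hzs
    have hcomp := comp_const P hδ hσm kt hzs
    apply ray_up P hx (y0 := yl P kt + δ/2) (fun j hj => by linarith [hktmax j hj])
    rw [hcomp, he]
    exact hb
  have stepAlt : ∀ x, genX P x → ∀ k ∈ KK P x, ∀ k' ∈ KK P x, yl P k < yl P k' →
      (∀ j ∈ KK P x, ¬(yl P k < yl P j ∧ yl P j < yl P k')) → sg P k' = -sg P k := by
    intro x hx k hk k' hk' hlt hadj
    set t := min δ (yl P k' - yl P k) / 2 with ht
    have htm : 0 < min δ (yl P k' - yl P k) := lt_min hd (by linarith)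
    have ht0 : 0 < t := by rw [ht]; linarith
    have htδ : t < δ := by
      have := min_le_left δ (yl P k' - yl P k); rw [ht]; linarith
    have htg : t < yl P k' - yl P k := by
      have := min_le_right δ (yl P k' - yl P k); rw [ht]; linarith
    have hza : ((x, yl P k + t) : ℝ×ℝ) ∈ strip P (sg P k) δ k :=
      side_above P hk ht0 htδ hδ
    have hzb : ((x, yl P k' - t) : ℝ×ℝ) ∈ strip P (-sg P k') δ k' :=
      side_below P hk' ht0 htδ hδ
    have hseg := seg_comp P (a := yl P k) (b := yl P k')
      (y := yl P k + t) (y' := yl P k' - t) hx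
      (fun j hj hm => hadj j hj ⟨hm.1, hm.2⟩)
      ⟨by linarith, by linarith⟩ ⟨by linarith, by linarith⟩
    have e1 := comp_const P hδ (sg_val P k) k hza
    have e2 := comp_const P hδ (neg_sg_val P k') k' hzb
    by_contra hne
    rcases sg_val P k with h|h <;> rcases sg_val P k' with h'|h' <;>
      rw [h] at e1 <;> rw [h'] at e2
    · exact stepNe (e2.symm.trans (hseg.symm.trans e1))
    · rw [h, h'] at hne; norm_num at hne
    · rw [h, h'] at hne; norm_num at hne
    · rw [neg_neg] at e2
      exact stepNe (e1.symm.trans (hseg.trans e2))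
  have hgle : ∀ x, genX P x →
      (∑ k : Fin (n+1), (Ioo (mn P k) (mx P k)).indicator
        (fun _ => sg P k * yl P k) x) ≤ 0 := by
    intro x hx
    rw [g_eq_sum]
    apply alt_sum_aux (yl P) (sg P) (KK P x).card (KK P x) le_rfl
    · exact fun k hk k' hk' h => levels_inj P hk hk' h
    · exact fun k hk k' hk' hlt hadj => stepAlt x hx k hk k' hk' hlt hadj
    · exact fun k hk htopk => stepTop x hx k hk htopk
    · exact fun k hk hbotk => stepBot x hx k hk hbotk
  have hfin : ({x : ℝ | ¬ genX P x}).Finite := by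
    apply Set.Finite.subset (Set.finite_range (fun k : Fin (n+1) => (P.v k).1))
    intro x hx
    rw [mem_setOf_eq, genX] at hx
    push_neg at hx
    obtain ⟨k, hk⟩ := hx
    exact ⟨k, hk.symm⟩
  have hae : ∀ᵐ x : ℝ, (∑ k : Fin (n+1), (Ioo (mn P k) (mx P k)).indicator
      (fun _ => sg P k * yl P k) x) ≤ 0 := by
    rw [MeasureTheory.ae_iff]
    apply MeasureTheory.measure_mono_null (t := {x : ℝ | ¬ genX P x})
    · intro x hx
      rw [mem_setOf_eq] at hx ⊢
      intro hgen
      exact hx (hgle x hgen)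
    · exact hfin.measure_zero _
  have hle := MeasureTheory.integral_nonpos_of_ae hae
  rw [integral_g] at hle
  linarith [shoelace P]

end
end RectAux

namespace RectAux
open RectPolygon Set
noncomputable section
variable {n : ℕ} (P : RectPolygon n)

lemma not_region_of_strip {δ : ℝ} (hδ : Good P δ) (k : Fin (n+1)) {z : ℝ × ℝ}
    (hz : z ∈ strip P 1 δ k) : z ∉ P.region := by
  intro hreg
  have hσ1 : (1:ℝ) = 1 ∨ (1:ℝ) = -1 := Or.inl rfl
  rw [RectPolygon.region, Set.mem_union] at hreg
  rcases hreg with hbd | hm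
  · exact strip_subset_compl P hδ hσ1 k hz hbd
  · rw [mem_setOf_eq] at hm
    have h2 := hm.2
    rw [comp_const P hδ hσ1 k hz] at h2
    exact master P hδ h2

end
end RectAux

open RectPolygon in
/-- For a horizontal edge of a rectilinear hole: interior points sufficiently close to the
relative interior of a clockwise-leftward edge lie above it, and interior points
sufficiently close to the relative interior of a clockwise-rightward edge lie below it. -/
theorem interior_side_of_horizontal_edge {n : ℕ} (P : RectPolygon n)
    (i : Fin (n + 1)) (t : ℝ) (ht : t ∈ Ioo (0:ℝ) 1) :
    (P.Leftward i → ∃ ε > (0:ℝ), ∀ q ∈ interior P.region,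
        dist q (P.v i + t • (P.v (i + 1) - P.v i)) < ε → (P.v i).2 < q.2) ∧
    (P.Rightward i → ∃ ε > (0:ℝ), ∀ q ∈ interior P.region,
        dist q (P.v i + t • (P.v (i + 1) - P.v i)) < ε → q.2 < (P.v i).2) := by
  classical
  open RectAux in
  obtain ⟨δ, hδ⟩ := RectAux.exists_good P
  obtain ⟨ht0, ht1⟩ := ht
  have hp1 : (P.v i + t • (P.v (i + 1) - P.v i)).1
      = (P.v i).1 + t * ((P.v (i+1)).1 - (P.v i).1) := by simp
  have hp2g : (P.v i + t • (P.v (i + 1) - P.v i)).2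
      = (P.v i).2 + t * ((P.v (i+1)).2 - (P.v i).2) := by simp
  constructor
  · -- Leftward
    rintro ⟨hy, hlt⟩
    set p := P.v i + t • (P.v (i + 1) - P.v i) with hp
    have hp2 : p.2 = (P.v i).2 := by rw [hp2g, ← hy]; ring
    have hmn : RectAux.mn P i = (P.v (i+1)).1 := min_eq_right hlt.le
    have hmx : RectAux.mx P i = (P.v i).1 := max_eq_left hlt.le
    set D := RectAux.mx P i - RectAux.mn P i with hD
    have hD0 : 0 < D := by rw [hD, hmn, hmx]; linarith
    set ε := min δ (min (t * D) ((1-t) * D)) with hε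
    have hε0 : 0 < ε :=
      lt_min hδ.pos (lt_min (mul_pos ht0 hD0) (mul_pos (by linarith) hD0))
    have hεδ : ε ≤ δ := min_le_left _ _
    have hεt : ε ≤ t * D := le_trans (min_le_right _ _) (min_le_left _ _)
    have hεt' : ε ≤ (1-t) * D := le_trans (min_le_right _ _) (min_le_right _ _)
    refine ⟨ε, hε0, ?_⟩
    intro q hq hdist
    by_contra hq2
    push_neg at hq2
    have hd1 : |q.1 - p.1| < ε := by
      calc |q.1 - p.1| = dist q.1 p.1 := (Real.dist_eq _ _).symm
        _ ≤ dist q p := by rw [Prod.dist_eq]; exact le_max_left _ _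
        _ < ε := hdist
    have hd2 : |q.2 - p.2| < ε := by
      calc |q.2 - p.2| = dist q.2 p.2 := (Real.dist_eq _ _).symm
        _ ≤ dist q p := by rw [Prod.dist_eq]; exact le_max_right _ _
        _ < ε := hdist
    rw [abs_lt] at hd1 hd2
    have hx1 : RectAux.mn P i < q.1 := by
      rw [hmn]
      rw [hp1] at hd1
      rw [hD, hmn, hmx] at hεt'
      nlinarith [hd1.1]
    have hx2 : q.1 < RectAux.mx P i := by
      rw [hmx]
      rw [hp1] at hd1
      rw [hD, hmn, hmx] at hεt
      nlinarith [hd1.2]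
    have hKi : i ∈ RectAux.KK P q.1 := by
      rw [RectAux.KK, Finset.mem_filter]
      exact ⟨Finset.mem_univ _, hx1, hx2⟩
    have hsg : RectAux.sg P i = -1 := if_neg (not_lt.mpr hlt.le)
    have hnsg : -RectAux.sg P i = 1 := by rw [hsg]; norm_num
    rcases eq_or_lt_of_le hq2 with heq | hlt2
    · -- q.2 = y : nudge down
      obtain ⟨r, hr0, hball⟩ := Metric.mem_nhds_iff.mp (mem_interior_iff_mem_nhds.mp hq)
      set s := min r ε / 2 with hs
      have hs0 : 0 < s := by
        have := lt_min hr0 hε0; rw [hs]; linarith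
      have hsr : s < r := by
        have := min_le_left r ε; rw [hs]; linarith
      have hsδ : s < δ := by
        have := min_le_right r ε; rw [hs]; linarith
      have hq' : ((q.1, RectAux.yl P i - s) : ℝ×ℝ) ∈ P.region := by
        apply hball
        rw [Metric.mem_ball, Prod.dist_eq]
        apply max_lt
        · simpa using hr0
        · rw [Real.dist_eq, RectAux.yl, heq]
          have he2 : ((q.1, (P.v i).2 - s) : ℝ×ℝ).2 - (P.v i).2 = -s := by simp
          rw [he2, abs_neg, abs_of_pos hs0]
          exact hsr
      have hstrip := RectAux.side_below P hKi hs0 hsδ hδ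
      rw [hnsg] at hstrip
      exact RectAux.not_region_of_strip P hδ i hstrip hq'
    · -- q.2 < y
      have hsδ2 : (P.v i).2 - q.2 < δ := by
        have : -(ε) < q.2 - p.2 := hd2.1
        rw [hp2] at this
        linarith
      have hstrip := RectAux.side_below P (s := (P.v i).2 - q.2) hKi (by linarith) hsδ2 hδ
      rw [hnsg] at hstrip
      have hqeq : ((q.1, RectAux.yl P i - ((P.v i).2 - q.2)) : ℝ×ℝ) = q := by
        apply Prod.ext
        · rfl
        · rw [RectAux.yl]; show (P.v i).2 - ((P.v i).2 - q.2) = q.2; ring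
      rw [hqeq] at hstrip
      exact RectAux.not_region_of_strip P hδ i hstrip (interior_subset hq)
  · -- Rightward
    rintro ⟨hy, hlt⟩
    set p := P.v i + t • (P.v (i + 1) - P.v i) with hp
    have hp2 : p.2 = (P.v i).2 := by rw [hp2g, ← hy]; ring
    have hmn : RectAux.mn P i = (P.v i).1 := min_eq_left hlt.le
    have hmx : RectAux.mx P i = (P.v (i+1)).1 := max_eq_right hlt.le
    set D := RectAux.mx P i - RectAux.mn P i with hD
    have hD0 : 0 < D := by rw [hD, hmn, hmx]; linarith
    set ε := min δ (min (t * D) ((1-t) * D)) with hε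
    have hε0 : 0 < ε :=
      lt_min hδ.pos (lt_min (mul_pos ht0 hD0) (mul_pos (by linarith) hD0))
    have hεδ : ε ≤ δ := min_le_left _ _
    have hεt : ε ≤ t * D := le_trans (min_le_right _ _) (min_le_left _ _)
    have hεt' : ε ≤ (1-t) * D := le_trans (min_le_right _ _) (min_le_right _ _)
    refine ⟨ε, hε0, ?_⟩
    intro q hq hdist
    by_contra hq2
    push_neg at hq2
    have hd1 : |q.1 - p.1| < ε := by
      calc |q.1 - p.1| = dist q.1 p.1 := (Real.dist_eq _ _).symm
        _ ≤ dist q p := by rw [Prod.dist_eq]; exact le_max_left _ _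
        _ < ε := hdist
    have hd2 : |q.2 - p.2| < ε := by
      calc |q.2 - p.2| = dist q.2 p.2 := (Real.dist_eq _ _).symm
        _ ≤ dist q p := by rw [Prod.dist_eq]; exact le_max_right _ _
        _ < ε := hdist
    rw [abs_lt] at hd1 hd2
    have hx1 : RectAux.mn P i < q.1 := by
      rw [hmn]
      rw [hp1] at hd1
      rw [hD, hmn, hmx] at hεt
      nlinarith [hd1.1]
    have hx2 : q.1 < RectAux.mx P i := by
      rw [hmx]
      rw [hp1] at hd1
      rw [hD, hmn, hmx] at hεt'
      nlinarith [hd1.2]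
    have hKi : i ∈ RectAux.KK P q.1 := by
      rw [RectAux.KK, Finset.mem_filter]
      exact ⟨Finset.mem_univ _, hx1, hx2⟩
    have hsg : RectAux.sg P i = 1 := if_pos hlt
    rcases eq_or_lt_of_le hq2 with heq | hlt2
    · -- q.2 = y : nudge up
      obtain ⟨r, hr0, hball⟩ := Metric.mem_nhds_iff.mp (mem_interior_iff_mem_nhds.mp hq)
      set s := min r ε / 2 with hs
      have hs0 : 0 < s := by
        have := lt_min hr0 hε0; rw [hs]; linarith
      have hsr : s < r := by
        have := min_le_left r ε; rw [hs]; linarith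
      have hsδ : s < δ := by
        have := min_le_right r ε; rw [hs]; linarith
      have hq' : ((q.1, RectAux.yl P i + s) : ℝ×ℝ) ∈ P.region := by
        apply hball
        rw [Metric.mem_ball, Prod.dist_eq]
        apply max_lt
        · simpa using hr0
        · rw [Real.dist_eq, RectAux.yl, heq]
          have he2 : ((q.1, q.2 + s) : ℝ×ℝ).2 - q.2 = s := by simp
          rw [he2, abs_of_pos hs0]
          exact hsr
      have hstrip := RectAux.side_above P hKi hs0 hsδ hδ
      rw [hsg] at hstrip
      exact RectAux.not_region_of_strip P hδ i hstrip hq'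
    · -- q.2 > y
      have hsδ2 : q.2 - (P.v i).2 < δ := by
        have : q.2 - p.2 < ε := hd2.2
        rw [hp2] at this
        linarith
      have hstrip := RectAux.side_above P (s := q.2 - (P.v i).2) hKi (by linarith) hsδ2 hδ
      rw [hsg] at hstrip
      have hqeq : ((q.1, RectAux.yl P i + (q.2 - (P.v i).2)) : ℝ×ℝ) = q := by
        apply Prod.ext
        · rfl
        · rw [RectAux.yl]; show (P.v i).2 + (q.2 - (P.v i).2) = q.2; ring
      rw [hqeq] at hstrip
      exact RectAux.not_region_of_strip P hδ i hstrip (interior_subset hq)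
end

section
/- Let H be a BLS-hole, R its unique rightmost edge, L_1,…,L_k its leftmost edges in clockwise order starting after R, and N_2,…,N_k its left notches in clockwise order starting after R. Then a clockwise traversal starting at R visits these edges in the order R, L_1, N_2, L_2, N_3, …, N_k, L_k, R (leftmost edges and left notches strictly alternate). Moreover, if H contains a falling corner, it is traversed between L_k and R. -/
open Set

namespace BLSAux

open RectPolygon Finset
open Fin.NatCast
open Fin.CommRing

variable {n : ℕ}

/-- The edge index `t` steps clockwise after `r`. -/
def idx (r : Fin (n + 1)) (t : ℕ) : Fin (n + 1) := r + (t : Fin (n + 1))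

lemma idx_succ (r : Fin (n + 1)) (t : ℕ) : idx r (t + 1) = idx r t + 1 := by
  simp only [idx, Nat.cast_add, Nat.cast_one, add_assoc]

lemma idx_zero (r : Fin (n + 1)) : idx r 0 = r := by simp [idx]

lemma idx_one (r : Fin (n + 1)) : idx r 1 = r + 1 := by
  simp [idx]

lemma idx_add_one_eq (r : Fin (n + 1)) {t u : ℕ} (h : u = t + 1) :
    idx r u = idx r t + 1 := by subst h; exact idx_succ r t

lemma cpos_idx (r : Fin (n + 1)) {t : ℕ} (ht : t ≤ n) : cpos r (idx r t) = t := by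
  unfold cpos idx
  have h : r + (t : Fin (n + 1)) - r = (t : Fin (n + 1)) := by ring
  rw [h, Fin.val_cast_of_lt (by omega)]

lemma idx_cpos (r i : Fin (n + 1)) : idx r (cpos r i) = i := by
  unfold cpos idx
  rw [Fin.cast_val_eq_self]
  ring

lemma cpos_le (r i : Fin (n + 1)) : cpos r i ≤ n := Nat.lt_succ_iff.mp (i - r).isLt

lemma idx_ne (hn3 : 3 ≤ n) (r : Fin (n + 1)) (t : ℕ) : idx r (t + 2) ≠ idx r t := by
  intro h
  have h1 : idx r t + (1 + 1) = idx r t := by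
    rw [← add_assoc, ← idx_succ, ← idx_succ, show t + 1 + 1 = t + 2 by omega]
    exact h
  have h2 : (1 + 1 : Fin (n + 1)) = 0 := add_eq_left.mp h1
  have h3 : ((2 : ℕ) : Fin (n + 1)) = 0 := by
    rw [Nat.cast_ofNat, ← one_add_one_eq_two]; exact h2
  have h4 := Fin.natCast_eq_zero.mp h3
  have := Nat.le_of_dvd (by norm_num) h4
  omega

variable {P : RectPolygon n}

lemma rw_or_lw {i : Fin (n + 1)} (hh : P.Horiz i) : P.Rightward i ∨ P.Leftward i := by
  rcases lt_trichotomy (P.v i).1 (P.v (i + 1)).1 with h | h | h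
  · exact Or.inl ⟨hh, h⟩
  · exact absurd (Prod.ext h hh) (P.nondegen i)
  · exact Or.inr ⟨hh, h⟩

lemma up_or_down {i : Fin (n + 1)} (hv : P.Vert i) : P.Upward i ∨ P.Downward i := by
  rcases lt_trichotomy (P.v i).2 (P.v (i + 1)).2 with h | h | h
  · exact Or.inl ⟨hv, h⟩
  · exact absurd (Prod.ext hv h) (P.nondegen i)
  · exact Or.inr ⟨hv, h⟩

lemma not_rw_of_lw {i : Fin (n + 1)} (h : P.Leftward i) : ¬ P.Rightward i :=
  fun h' => lt_asymm h.2 h'.2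

lemma alternate' (P : RectPolygon n) (i : Fin (n + 1)) : P.Vert i ↔ ¬ P.Vert (i + 1) := by
  have e : i + 2 = i + 1 + 1 := by ring
  show ((P.v i).1 = (P.v (i + 1)).1) ↔ ¬ ((P.v (i + 1)).1 = (P.v (i + 1 + 1)).1)
  rw [← e]
  exact P.alternate i

lemma vert_idx {r : Fin (n + 1)} (hVr : P.Vert r) (t : ℕ) :
    P.Vert (idx r t) ↔ Even t := by
  induction t with
  | zero => simp [idx_zero, hVr]
  | succ t ih =>
    rw [idx_succ, Nat.even_add_one, ← ih]
    have h := alternate' P (idx r t)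
    tauto

/-- The state after the `m`-th vertical edge following `r`: the `(2m+1)`-st edge
after `r` is rightward. -/
def sFn (P : RectPolygon n) (r : Fin (n + 1)) (m : ℕ) : Prop :=
  P.Rightward (idx r (2 * m + 1))

lemma lw_odd {r : Fin (n + 1)} (hVr : P.Vert r) {m : ℕ} (hns : ¬ sFn P r m) :
    P.Leftward (idx r (2 * m + 1)) := by
  have hnv : ¬ P.Vert (idx r (2 * m + 1)) := by
    rw [vert_idx hVr, Nat.even_iff]; omega
  have hh : P.Horiz (idx r (2 * m + 1)) := (P.axis _).resolve_left hnv
  exact (rw_or_lw hh).resolve_left hns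

lemma lm_iff {r : Fin (n + 1)} (hP : P.BLS) (hVr : P.Vert r) (m : ℕ) :
    P.LeftmostEdge (idx r (2 * m + 2)) ↔ (¬ sFn P r m ∧ sFn P r (m + 1)) := by
  have eA : idx r (2 * m + 2) = idx r (2 * m + 1) + 1 := idx_add_one_eq r (by omega)
  have eB : idx r (2 * m + 2) - 1 = idx r (2 * m + 1) := by
    rw [eA]; exact add_sub_cancel_right _ 1
  have eC : idx r (2 * m + 2) + 1 = idx r (2 * (m + 1) + 1) :=
    (idx_add_one_eq r (by omega : 2 * (m + 1) + 1 = (2 * m + 2) + 1)).symm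
  constructor
  · rintro ⟨hu, hl, hr'⟩
    rw [eB] at hl; rw [eC] at hr'
    exact ⟨not_rw_of_lw hl, hr'⟩
  · rintro ⟨hns, hs⟩
    have hl := lw_odd hVr hns
    have hv : P.Vert (idx r (2 * m + 2)) := (vert_idx hVr _).mpr ⟨m + 1, by ring⟩
    rcases up_or_down hv with hu | hd
    · exact ⟨hu, by rw [eB]; exact hl, by rw [eC]; exact hs⟩
    · exact absurd ⟨hd, by rw [eB]; exact hl, by rw [eC]; exact hs⟩ (hP.1 _)

lemma tf_iff {r : Fin (n + 1)} (hVr : P.Vert r) (m : ℕ) :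
    (sFn P r m ∧ ¬ sFn P r (m + 1)) ↔
      (P.LeftNotch (idx r (2 * m + 2)) ∨ P.RightmostEdge (idx r (2 * m + 2))) := by
  have eA : idx r (2 * m + 2) = idx r (2 * m + 1) + 1 := idx_add_one_eq r (by omega)
  have eB : idx r (2 * m + 2) - 1 = idx r (2 * m + 1) := by
    rw [eA]; exact add_sub_cancel_right _ 1
  have eC : idx r (2 * m + 2) + 1 = idx r (2 * (m + 1) + 1) :=
    (idx_add_one_eq r (by omega : 2 * (m + 1) + 1 = (2 * m + 2) + 1)).symm
  constructor
  · rintro ⟨hs, hns⟩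
    have hl := lw_odd hVr hns
    have hv : P.Vert (idx r (2 * m + 2)) := (vert_idx hVr _).mpr ⟨m + 1, by ring⟩
    rcases up_or_down hv with hu | hd
    · exact Or.inl ⟨hu, by rw [eB]; exact hs, by rw [eC]; exact hl⟩
    · exact Or.inr ⟨hd, by rw [eB]; exact hs, by rw [eC]; exact hl⟩
  · rintro (⟨hu, hr', hl⟩ | ⟨hd, hr', hl⟩) <;>
    · rw [eB] at hr'; rw [eC] at hl
      exact ⟨hr', not_rw_of_lw hl⟩

lemma fc_rm {r : Fin (n + 1)} (hP : P.BLS) (hVr : P.Vert r) (hn3 : 3 ≤ n) (m : ℕ)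
    (hfc : P.FallingCornerAt (idx r (2 * m + 2))) :
    P.RightmostEdge (idx r (2 * (m + 1) + 2)) := by
  obtain ⟨hd, hru⟩ := hfc
  have eA : idx r (2 * m + 2) = idx r (2 * m + 1) + 1 := idx_add_one_eq r (by omega)
  have eB : idx r (2 * m + 2) - 1 = idx r (2 * m + 1) := by
    rw [eA]; exact add_sub_cancel_right _ 1
  have eC : idx r (2 * m + 2) + 1 = idx r (2 * (m + 1) + 1) :=
    (idx_add_one_eq r (by omega : 2 * (m + 1) + 1 = (2 * m + 2) + 1)).symm
  have eD : idx r (2 * (m + 1) + 2) = idx r (2 * (m + 1) + 1) + 1 :=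
    idx_add_one_eq r (by omega)
  have eF : idx r (2 * (m + 1) + 2) - 1 = idx r (2 * (m + 1) + 1) := by
    rw [eD]; exact add_sub_cancel_right _ 1
  have eG : idx r (2 * (m + 1) + 2) + 1 = idx r (2 * (m + 2) + 1) :=
    (idx_add_one_eq r (by omega : 2 * (m + 2) + 1 = (2 * (m + 1) + 2) + 1)).symm
  have hru3 : P.Rightward (idx r (2 * (m + 1) + 1)) := by rw [← eC]; exact hru
  have hv4 : P.Vert (idx r (2 * (m + 1) + 2)) := (vert_idx hVr _).mpr ⟨m + 2, by ring⟩
  have hd4 : P.Downward (idx r (2 * (m + 1) + 2)) := by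
    rcases up_or_down hv4 with hu4 | hd4
    · exfalso
      refine hP.2.1 (idx r (2 * (m + 1) + 1)) ⟨hru3, ?_, ?_⟩
      · have e : idx r (2 * (m + 1) + 1) - 1 = idx r (2 * m + 2) := by
          rw [← eC]; exact add_sub_cancel_right _ 1
        rw [e]; exact hd
      · rw [← eD]; exact hu4
    · exact hd4
  by_cases hs5 : sFn P r (m + 2)
  · exfalso
    have hfc2 : P.FallingCornerAt (idx r (2 * (m + 1) + 2)) := ⟨hd4, by rw [eG]; exact hs5⟩
    have heq := hP.2.2 _ _ (⟨hd, hru⟩ : P.FallingCornerAt (idx r (2 * m + 2))) hfc2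
    have heq2 : idx r (2 * m + 2 + 2) = idx r (2 * m + 2) := by
      rw [show 2 * m + 2 + 2 = 2 * (m + 1) + 2 by omega]
      exact heq.symm
    exact idx_ne hn3 r (2 * m + 2) heq2
  · have hl5 := lw_odd hVr hs5
    exact ⟨hd4, by rw [eF]; exact hru3, by rw [eG]; exact hl5⟩

open Classical in
/-- Positions (before `T`) of state flips from left to right (leftmost edges). -/
noncomputable def Aset (P : RectPolygon n) (r : Fin (n + 1)) (T : ℕ) : Finset ℕ :=
  (Finset.range T).filter fun t => ¬ sFn P r t ∧ sFn P r (t + 1)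

open Classical in
/-- Positions (before `T`) of state flips from right to left. -/
noncomputable def Bset (P : RectPolygon n) (r : Fin (n + 1)) (T : ℕ) : Finset ℕ :=
  (Finset.range T).filter fun t => sFn P r t ∧ ¬ sFn P r (t + 1)

lemma mem_Aset {r : Fin (n + 1)} {T t : ℕ} :
    t ∈ Aset P r T ↔ t < T ∧ (¬ sFn P r t ∧ sFn P r (t + 1)) := by
  simp [Aset]

lemma mem_Bset {r : Fin (n + 1)} {T t : ℕ} :
    t ∈ Bset P r T ↔ t < T ∧ (sFn P r t ∧ ¬ sFn P r (t + 1)) := by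
  simp [Bset]

open Classical in
lemma count_AB (P : RectPolygon n) (r : Fin (n + 1)) (hs0 : ¬ sFn P r 0) (T : ℕ) :
    (Aset P r T).card = (Bset P r T).card + (if sFn P r T then 1 else 0) := by
  induction T with
  | zero => simp [Aset, Bset, hs0]
  | succ T ih =>
    unfold Aset Bset at *
    rw [Finset.range_add_one, Finset.filter_insert, Finset.filter_insert]
    by_cases h1 : sFn P r T <;> by_cases h2 : sFn P r (T + 1)
    · rw [if_neg (by tauto), if_neg (by tauto), ih, if_pos h1, if_pos h2]
    · rw [if_neg (by tauto), if_pos ⟨h1, h2⟩,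
        Finset.card_insert_of_notMem (by simp), ih, if_pos h1, if_neg h2]
    · rw [if_pos ⟨h1, h2⟩, if_neg (by tauto),
        Finset.card_insert_of_notMem (by simp), ih, if_neg h1, if_pos h2]
    · rw [if_neg (by tauto), if_neg (by tauto), ih, if_neg h1, if_neg h2]

lemma card_le_of_enum {q : ℕ} (c : Fin q → ℕ) (hc : StrictMono c) (S : Finset ℕ)
    (i : Fin q) (hS : ∀ t ∈ S, (∃ j', c j' = t) ∧ t < c i) : S.card ≤ (i : ℕ) := by
  classical
  have hsub : S ⊆ (Finset.univ.filter fun j' : Fin q => j' < i).image c := by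
    intro t ht
    obtain ⟨⟨j', rfl⟩, hlt⟩ := hS t ht
    exact Finset.mem_image.mpr ⟨j', by simp [hc.lt_iff_lt.mp hlt], rfl⟩
  calc S.card ≤ _ := Finset.card_le_card hsub
    _ ≤ (Finset.univ.filter fun j' : Fin q => j' < i).card := Finset.card_image_le
    _ = (i : ℕ) := by
        rw [show (Finset.univ.filter fun j' : Fin q => j' < i) = Finset.Iio i by
          ext x; simp]
        exact Fin.card_Iio i

lemma le_card_of_enum {q : ℕ} (c : Fin q → ℕ) (hc : StrictMono c) (S : Finset ℕ)
    (i : Fin q) (hS : ∀ j' : Fin q, j' ≤ i → c j' ∈ S) : (i : ℕ) + 1 ≤ S.card := by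
  classical
  have hsub : (Finset.univ.filter fun j' : Fin q => j' ≤ i).image c ⊆ S := by
    intro t ht
    simp only [Finset.mem_image, Finset.mem_filter, Finset.mem_univ, true_and] at ht
    obtain ⟨j', hj', rfl⟩ := ht
    exact hS j' hj'
  have hcard : ((Finset.univ.filter fun j' : Fin q => j' ≤ i).image c).card = (i : ℕ) + 1 := by
    rw [Finset.card_image_of_injective _ hc.injective]
    rw [show (Finset.univ.filter fun j' : Fin q => j' ≤ i) = Finset.Iic i by
      ext x; simp]
    exact Fin.card_Iic i
  rw [← hcard]
  exact Finset.card_le_card hsub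

end BLSAux

open RectPolygon in
/-- Canonical ordering of the vertical special edges of a BLS-hole: starting at the unique
rightmost edge `R` and traversing clockwise, leftmost edges and left notches strictly
alternate as `R, L₁, N₂, L₂, …, N_k, L_k, R`; moreover any falling corner is traversed
between `L_k` and `R`. -/
theorem bls_canonical_ordering {n : ℕ} (P : RectPolygon n) (hP : P.BLS)
    (r : Fin (n + 1)) (hr : P.RightmostEdge r)
    (k : ℕ) (hk : 1 ≤ k)
    (L : Fin k → Fin (n + 1)) (hL : ∀ j, P.LeftmostEdge (L j))
    (hLsurj : ∀ i, P.LeftmostEdge i → ∃ j, L j = i)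
    (hLmono : StrictMono fun j => cpos r (L j))
    (N : Fin (k - 1) → Fin (n + 1)) (hN : ∀ j, P.LeftNotch (N j))
    (hNsurj : ∀ i, P.LeftNotch i → ∃ j, N j = i)
    (hNmono : StrictMono fun j => cpos r (N j)) :
    0 < cpos r (L ⟨0, hk⟩) ∧
    (∀ j : Fin (k - 1),
      cpos r (L (j.castLE (Nat.sub_le k 1))) < cpos r (N j) ∧
      cpos r (N j) < cpos r (L (Fin.cast (by omega) j.succ))) ∧
    (∀ i : Fin (n + 1), P.FallingCornerAt i → cpos r (L ⟨k - 1, by omega⟩) < cpos r i) := by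
  classical
  obtain ⟨hdr, hrwr, hlwr⟩ := hr
  have hVr : P.Vert r := hdr.1
  -- `n + 1` is even
  have hidxtop : BLSAux.idx r (n + 1) = r := by
    unfold BLSAux.idx
    rw [Fin.natCast_self, add_zero]
  have hev : Even (n + 1) := (BLSAux.vert_idx hVr (n + 1)).mp (by rwa [hidxtop])
  have hn0 : n ≠ 0 := by
    intro h; subst h
    have h1 : r + 1 = r := by
      apply Fin.ext
      have := (r + 1).isLt
      have := r.isLt
      omega
    exact P.nondegen r (congrArg P.v h1.symm)
  have hn1 : n ≠ 1 := by
    intro h; subst h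
    have h2 : r + 1 + 1 = r := by
      rw [add_assoc, show (1 : Fin 2) + 1 = 0 from by decide, add_zero]
    have h3 : r + 1 = r - 1 := eq_sub_of_add_eq h2
    rw [← h3] at hrwr
    exact BLSAux.not_rw_of_lw hlwr hrwr
  have hn3 : 3 ≤ n := by
    rcases hev with ⟨c, hc⟩; omega
  obtain ⟨M, hM⟩ : ∃ M, n + 1 = 2 * M := by
    rcases hev with ⟨c, hc⟩; exact ⟨c, by omega⟩
  have hM2 : 2 ≤ M := by omega
  -- endpoints of the state sequence
  have hs0 : ¬ BLSAux.sFn P r 0 := by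
    intro hs
    have hs' : P.Rightward (BLSAux.idx r (2 * 0 + 1)) := hs
    have e : BLSAux.idx r (2 * 0 + 1) = r + 1 := by
      rw [show 2 * 0 + 1 = 1 by omega, BLSAux.idx_one]
    rw [e] at hs'
    exact BLSAux.not_rw_of_lw hlwr hs'
  have hidxn : BLSAux.idx r n = r - 1 := by
    have h := BLSAux.idx_succ r n
    rw [hidxtop] at h
    exact eq_sub_of_add_eq h.symm
  have hsT : BLSAux.sFn P r (M - 1) := by
    show P.Rightward (BLSAux.idx r (2 * (M - 1) + 1))
    rw [show 2 * (M - 1) + 1 = n by omega, hidxn]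
    exact hrwr
  -- every vertical edge other than `r` sits at an even positive clockwise position
  have keyV : ∀ i : Fin (n + 1), P.Vert i → i ≠ r →
      ∃ c, cpos r i = 2 * c + 2 ∧ c + 1 ≤ M - 1 := by
    intro i hvi hne
    have hidx : BLSAux.idx r (cpos r i) = i := BLSAux.idx_cpos r i
    have hev2 : Even (cpos r i) := (BLSAux.vert_idx hVr (cpos r i)).mp (by rwa [hidx])
    have hne0 : cpos r i ≠ 0 := fun h0 => hne (by rw [← hidx, h0, BLSAux.idx_zero])
    have hlen : cpos r i ≤ n := BLSAux.cpos_le r i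
    rcases hev2 with ⟨c, hc⟩
    exact ⟨c - 1, by omega, by omega⟩
  -- encode the leftmost edges
  have hLne : ∀ j, L j ≠ r := by
    intro j h
    exact lt_asymm ((h ▸ (hL j).1).2) hdr.2
  have keyL : ∀ j : Fin k, ∃ c, cpos r (L j) = 2 * c + 2 ∧ c + 1 ≤ M - 1 :=
    fun j => keyV (L j) (hL j).1.1 (hLne j)
  choose a ha1 ha2 using keyL
  have hidxa : ∀ j, BLSAux.idx r (2 * a j + 2) = L j := by
    intro j
    rw [← ha1 j, BLSAux.idx_cpos]
  have haMono : StrictMono a := by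
    intro j j' h
    have h2 : cpos r (L j) < cpos r (L j') := hLmono h
    have e1 := ha1 j; have e2 := ha1 j'
    omega
  have haF : ∀ j, ¬ BLSAux.sFn P r (a j) ∧ BLSAux.sFn P r (a j + 1) := by
    intro j
    exact (BLSAux.lm_iff hP hVr (a j)).mp (by rw [hidxa j]; exact hL j)
  -- encode the left notches
  have hNne : ∀ j, N j ≠ r := by
    intro j h
    exact lt_asymm ((h ▸ (hN j).1).2) hdr.2
  have keyN : ∀ j : Fin (k - 1), ∃ c, cpos r (N j) = 2 * c + 2 ∧ c + 1 ≤ M - 1 :=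
    fun j => keyV (N j) (hN j).1.1 (hNne j)
  choose b hb1 hb2 using keyN
  have hidxb : ∀ j, BLSAux.idx r (2 * b j + 2) = N j := by
    intro j
    rw [← hb1 j, BLSAux.idx_cpos]
  have hbMono : StrictMono b := by
    intro j j' h
    have h2 : cpos r (N j) < cpos r (N j') := hNmono h
    have e1 := hb1 j; have e2 := hb1 j'
    omega
  have hbG : ∀ j, BLSAux.sFn P r (b j) ∧ ¬ BLSAux.sFn P r (b j + 1) := by
    intro j
    exact (BLSAux.tf_iff hVr (b j)).mpr (Or.inl (by rw [hidxb j]; exact hN j))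
  -- surjectivity of the encodings onto flips
  have hFT_surj : ∀ t, t < M - 1 → (¬ BLSAux.sFn P r t ∧ BLSAux.sFn P r (t + 1)) →
      ∃ j, a j = t := by
    intro t ht hFt
    have hlm := (BLSAux.lm_iff hP hVr t).mpr hFt
    obtain ⟨j, hj⟩ := hLsurj _ hlm
    have hc : cpos r (L j) = 2 * t + 2 := by
      rw [hj]; exact BLSAux.cpos_idx r (by omega)
    have := ha1 j
    exact ⟨j, by omega⟩
  have hcount := BLSAux.count_AB P r hs0
  -- global counting: the `A`-flips are exactly the `a j`
  have hAset : BLSAux.Aset P r (M - 1) = Finset.image a Finset.univ := by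
    ext t
    rw [BLSAux.mem_Aset]
    simp only [Finset.mem_image, Finset.mem_univ, true_and]
    constructor
    · rintro ⟨ht, hFt⟩; exact hFT_surj t ht hFt
    · rintro ⟨j, rfl⟩
      exact ⟨by have := ha2 j; omega, haF j⟩
  have hcardA : (BLSAux.Aset P r (M - 1)).card = k := by
    rw [hAset, Finset.card_image_of_injective _ haMono.injective, Finset.card_univ,
      Fintype.card_fin]
  have hcardB : (BLSAux.Bset P r (M - 1)).card = k - 1 := by
    have h1 := hcount (M - 1)
    rw [if_pos hsT, hcardA] at h1
    omega
  have hbsub : Finset.image b Finset.univ ⊆ BLSAux.Bset P r (M - 1) := by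
    intro t ht
    simp only [Finset.mem_image, Finset.mem_univ, true_and] at ht
    obtain ⟨j, rfl⟩ := ht
    exact BLSAux.mem_Bset.mpr ⟨by have := hb2 j; omega, hbG j⟩
  have hbset : Finset.image b Finset.univ = BLSAux.Bset P r (M - 1) :=
    Finset.eq_of_subset_of_card_le hbsub (by
      rw [hcardB, Finset.card_image_of_injective _ hbMono.injective, Finset.card_univ,
        Fintype.card_fin])
  have hGT_surj : ∀ t, t < M - 1 → (BLSAux.sFn P r t ∧ ¬ BLSAux.sFn P r (t + 1)) →
      ∃ j, b j = t := by
    intro t ht hGt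
    have : t ∈ Finset.image b Finset.univ := by
      rw [hbset]
      exact BLSAux.mem_Bset.mpr ⟨ht, hGt⟩
    simpa using this
  -- the interleaving claims
  have claimA : ∀ (j : Fin (k - 1)) (jj : Fin k), (jj : ℕ) = (j : ℕ) → a jj < b j := by
    intro j jj hval
    have h1 := hcount (b j + 1)
    rw [if_neg (hbG j).2, add_zero] at h1
    have hge : (j : ℕ) + 1 ≤ (BLSAux.Bset P r (b j + 1)).card := by
      refine BLSAux.le_card_of_enum b hbMono _ j ?_
      intro j' hj'
      refine BLSAux.mem_Bset.mpr ⟨?_, hbG j'⟩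
      have := hbMono.monotone hj'
      omega
    have hle : a jj ≤ b j := by
      by_contra hgt
      push_neg at hgt
      have hub := BLSAux.card_le_of_enum a haMono (BLSAux.Aset P r (b j + 1)) jj ?_
      · omega
      · intro t ht
        rw [BLSAux.mem_Aset] at ht
        have hb2j := hb2 j
        exact ⟨hFT_surj t (by omega) ht.2, by omega⟩
    have hne : a jj ≠ b j := by
      intro he
      have hf := haF jj
      rw [he] at hf
      exact hf.1 (hbG j).1
    omega
  have claimB : ∀ (j : Fin (k - 1)) (jj : Fin k), (jj : ℕ) = (j : ℕ) + 1 → b j < a jj := by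
    intro j jj hval
    have h2 := hcount (a jj + 1)
    rw [if_pos (haF jj).2] at h2
    have hge : (j : ℕ) + 2 ≤ (BLSAux.Aset P r (a jj + 1)).card := by
      have := BLSAux.le_card_of_enum a haMono (BLSAux.Aset P r (a jj + 1)) jj ?_
      · omega
      · intro j' hj'
        refine BLSAux.mem_Aset.mpr ⟨?_, haF j'⟩
        have := haMono.monotone hj'
        omega
    have hle : b j ≤ a jj := by
      by_contra hgt
      push_neg at hgt
      have hub := BLSAux.card_le_of_enum b hbMono (BLSAux.Bset P r (a jj + 1)) j ?_
      · omega
      · intro t ht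
        rw [BLSAux.mem_Bset] at ht
        have ha2j := ha2 jj
        exact ⟨hGT_surj t (by omega) ht.2, by omega⟩
    have hne : b j ≠ a jj := by
      intro he
      have hf := haF jj
      rw [← he] at hf
      exact hf.1 (hbG j).1
    omega
  refine ⟨?_, ?_, ?_⟩
  · have := ha1 ⟨0, hk⟩
    omega
  · intro j
    constructor
    · have hlt := claimA j (j.castLE (Nat.sub_le k 1)) (by simp)
      have e1 := ha1 (j.castLE (Nat.sub_le k 1))
      have e2 := hb1 j
      omega
    · have hgen : ∀ jj : Fin k, (jj : ℕ) = (j : ℕ) + 1 → cpos r (N j) < cpos r (L jj) := by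
        intro jj hval
        have hlt := claimB j jj hval
        have e1 := ha1 jj
        have e2 := hb1 j
        omega
      exact hgen _ (by simp)
  · intro i hfc
    have hVi : P.Vert i := hfc.1.1
    have hine : i ≠ r := by
      intro h; subst h
      exact BLSAux.not_rw_of_lw hlwr hfc.2
    obtain ⟨t, hct, htM⟩ := keyV i hVi hine
    have hidxi : BLSAux.idx r (2 * t + 2) = i := by
      rw [← hct, BLSAux.idx_cpos]
    have hrm := BLSAux.fc_rm hP hVr hn3 t (by rw [hidxi]; exact hfc)
    have hnoRM : ∀ u, u + 1 ≤ M - 1 → ¬ P.RightmostEdge (BLSAux.idx r (2 * u + 2)) := by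
      intro u hu hRM
      have hGu : BLSAux.sFn P r u ∧ ¬ BLSAux.sFn P r (u + 1) :=
        (BLSAux.tf_iff hVr u).mpr (Or.inr hRM)
      obtain ⟨j, hj⟩ := hGT_surj u (by omega) hGu
      have hNj : N j = BLSAux.idx r (2 * u + 2) := by
        rw [← BLSAux.idx_cpos r (N j), hb1 j, hj]
      have hln := hN j
      rw [hNj] at hln
      exact (lt_asymm hln.1.2) hRM.1.2
    have ht' : t + 1 = M - 1 := by
      by_contra hne2
      exact hnoRM (t + 1) (by omega) hrm
    have hgen3 : ∀ jj : Fin k, cpos r (L jj) < cpos r i := by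
      intro jj
      have e1 := ha1 jj
      have e2 := ha2 jj
      have hne3 : a jj ≠ t := by
        intro he
        have hLi : L jj = i := by rw [← hidxa jj, he, hidxi]
        have hu := (hL jj).1
        rw [hLi] at hu
        exact (lt_asymm hu.2) hfc.1.2
      omega
    exact hgen3 _
end
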